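/- arXiv:1809.00943 — 7 statements merged into one kernel-verified Lean document; each statement's English description precedes it below -/
import Mathlib

section
/- Let L be a normal modal logic enjoying ULIP. Then pre-interpolants exist: for every formula φ and all finite sets P, Q of propositional variables there exists a formula θ' such that v⁺(θ') ⊆ v⁺(φ)∖P, v⁻(θ') ⊆ v⁻(φ)∖Q, L ⊢ θ'→φ, and for every formula ψ with v⁺(ψ)∩P = ∅, v⁻(ψ)∩Q = ∅ and L ⊢ ψ→φ, one has L ⊢ ψ→θ'. -/
/-- Modal formulas: propositional variables, ⊥, →, □. -/
inductive Formula : Type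
  | var : ℕ → Formula
  | bot : Formula
  | imp : Formula → Formula → Formula
  | box : Formula → Formula
  deriving DecidableEq

namespace Formula

def neg (φ : Formula) : Formula := φ.imp bot

def top : Formula := neg bot

def and (φ ψ : Formula) : Formula := (φ.imp ψ.neg).neg

def iff (φ ψ : Formula) : Formula := (φ.imp ψ).and (ψ.imp φ)

def dia (φ : Formula) : Formula := φ.neg.box.neg

/-- Variables occurring positively (`true`) / negatively (`false`). -/
def vsgn : Formula → Bool → Finset ℕ
  | var p, true => {p}
  | var _, false => ∅
  | bot, _ => ∅
  | imp φ ψ, b => vsgn φ (!b) ∪ vsgn ψ b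
  | box φ, b => vsgn φ b

def vpos (φ : Formula) : Finset ℕ := vsgn φ true
def vneg (φ : Formula) : Finset ℕ := vsgn φ false
def vars (φ : Formula) : Finset ℕ := vpos φ ∪ vneg φ

/-- Modal depth. -/
def depth : Formula → ℕ
  | var _ => 0
  | bot => 0
  | imp φ ψ => max (depth φ) (depth ψ)
  | box φ => depth φ + 1

/-- Uniform substitution. -/
def subst (σ : ℕ → Formula) : Formula → Formula
  | var p => σ p
  | bot => bot
  | imp φ ψ => (subst σ φ).imp (subst σ ψ)
  | box φ => (subst σ φ).box

/-- The set of subformulas. -/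
def subfmls : Formula → Finset Formula
  | var p => {var p}
  | bot => {bot}
  | imp φ ψ => insert (imp φ ψ) (subfmls φ ∪ subfmls ψ)
  | box φ => insert (box φ) (subfmls φ)

/-- n(φ) = |{ψ : □ψ ∈ Sub(φ)}|. -/
def boxCount (φ : Formula) : ℕ :=
  ((subfmls φ).filter fun ψ => box ψ ∈ subfmls φ).card

/-- The translation ⋆ : p⋆ = p, ⊥⋆ = ⊥, (φ→ψ)⋆ = φ⋆→ψ⋆, (□φ)⋆ = φ⋆ ∧ □φ⋆. -/
def star : Formula → Formula
  | var p => var p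
  | bot => bot
  | imp φ ψ => (star φ).imp (star ψ)
  | box φ => (star φ).and (star φ).box

end Formula

/-- Propositional tautology: true under every valuation treating variables and
boxed formulas as atoms. -/
def Tautology (φ : Formula) : Prop :=
  ∀ v : Formula → Bool, v .bot = false →
    (∀ ψ θ : Formula, v (ψ.imp θ) = (!v ψ || v θ)) → v φ = true

/-- A normal modal logic: contains all tautologies and □(p→q)→(□p→□q), and is
closed under modus ponens, necessitation and uniform substitution. -/
structure IsNormal (L : Set Formula) : Prop where
  taut : ∀ φ, Tautology φ → φ ∈ L
  axK : ((Formula.var 0).imp (Formula.var 1)).box.imp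
      ((Formula.var 0).box.imp (Formula.var 1).box) ∈ L
  mp : ∀ φ ψ : Formula, φ.imp ψ ∈ L → φ ∈ L → ψ ∈ L
  nec : ∀ φ : Formula, φ ∈ L → φ.box ∈ L
  subst_mem : ∀ φ ∈ L, ∀ σ : ℕ → Formula, Formula.subst σ φ ∈ L

/-- The least normal modal logic including `X`. -/
def NormalExt (X : Set Formula) : Set Formula :=
  ⋂₀ {L : Set Formula | IsNormal L ∧ X ⊆ L}

/-- The least normal modal logic K. -/
def TheoryK : Set Formula := NormalExt ∅

def axT : Formula := (Formula.var 0).box.imp (Formula.var 0)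
def ax4 : Formula := (Formula.var 0).box.imp (Formula.var 0).box.box
def axB : Formula := (Formula.var 0).imp (Formula.var 0).dia.box
def axD : Formula := Formula.bot.box.neg
def axGL : Formula := ((Formula.var 0).box.imp (Formula.var 0)).box.imp (Formula.var 0).box
def axGrz : Formula :=
  (((Formula.var 0).imp (Formula.var 0).box).box.imp (Formula.var 0)).box.imp (Formula.var 0)

def TheoryKD : Set Formula := NormalExt {axD}
def TheoryKT : Set Formula := NormalExt {axT}
def TheoryKB : Set Formula := NormalExt {axB}
def TheoryKDB : Set Formula := NormalExt {axD, axB}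
def TheoryKTB : Set Formula := NormalExt {axT, axB}
def TheoryK4 : Set Formula := NormalExt {ax4}
def TheoryS4 : Set Formula := NormalExt {axT, ax4}
def TheoryGL : Set Formula := NormalExt {axGL}
def TheoryGrz : Set Formula := NormalExt {axGrz}

/-- L⋆ := {φ : L ⊢ φ⋆}. -/
def starLogic (L : Set Formula) : Set Formula := {φ | Formula.star φ ∈ L}

/-- θ is a uniform Lyndon interpolant of (φ, P, Q) in L. -/
def IsULInterpolant (L : Set Formula) (φ : Formula) (P Q : Finset ℕ) (θ : Formula) : Prop :=
  θ.vpos ⊆ φ.vpos \ P ∧ θ.vneg ⊆ φ.vneg \ Q ∧ φ.imp θ ∈ L ∧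
    ∀ ψ : Formula, ψ.vpos ∩ P = ∅ → ψ.vneg ∩ Q = ∅ → φ.imp ψ ∈ L → θ.imp ψ ∈ L

/-- The uniform Lyndon interpolation property. -/
def ULIP (L : Set Formula) : Prop :=
  ∀ (φ : Formula) (P Q : Finset ℕ), ∃ θ : Formula, IsULInterpolant L φ P Q θ

/-- The uniform interpolation property. -/
def UIP (L : Set Formula) : Prop :=
  ∀ (φ : Formula) (P : Finset ℕ), ∃ θ : Formula,
    θ.vars ⊆ φ.vars \ P ∧ φ.imp θ ∈ L ∧
      ∀ ψ : Formula, ψ.vars ∩ P = ∅ → φ.imp ψ ∈ L → θ.imp ψ ∈ L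

/-- The Lyndon interpolation property. -/
def LIP (L : Set Formula) : Prop :=
  ∀ φ ψ : Formula, φ.imp ψ ∈ L → ∃ θ : Formula,
    θ.vpos ⊆ φ.vpos ∩ ψ.vpos ∧ θ.vneg ⊆ φ.vneg ∩ ψ.vneg ∧
      φ.imp θ ∈ L ∧ θ.imp ψ ∈ L

/-- A Kripke model. -/
structure KripkeModel where
  W : Type
  nonempty : Nonempty W
  rel : W → W → Prop
  val : W → ℕ → Prop

/-- Satisfaction in a Kripke model. -/
def KripkeModel.Sat (M : KripkeModel) : Formula → M.W → Prop
  | .var p, w => M.val w p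
  | .bot, _ => False
  | .imp φ ψ, w => M.Sat φ w → M.Sat ψ w
  | .box φ, w => ∀ x, M.rel w x → M.Sat φ x

/-- A (P,Q)-formula: v⁺(φ) ⊆ P and v⁻(φ) ⊆ Q. -/
def PQFormula (P Q : Finset ℕ) (φ : Formula) : Prop := φ.vpos ⊆ P ∧ φ.vneg ⊆ Q

/-- `F n P Q` is a finite list of (P,Q)-formulas of modal depth ≤ n such that every
(P,Q)-formula of modal depth ≤ n is K-provably equivalent to some member. -/
def IsFamily (F : ℕ → Finset ℕ → Finset ℕ → List Formula) : Prop :=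
  ∀ (n : ℕ) (P Q : Finset ℕ),
    (∀ φ ∈ F n P Q, PQFormula P Q φ ∧ φ.depth ≤ n) ∧
    ∀ ψ : Formula, PQFormula P Q ψ → ψ.depth ≤ n →
      ∃ φ ∈ F n P Q, Formula.iff φ ψ ∈ TheoryK

/-- Th_n^{(P,Q)}(w) = {φ ∈ F_n^{(P,Q)} : w ⊩ φ}. -/
def Th (F : ℕ → Finset ℕ → Finset ℕ → List Formula) (M : KripkeModel)
    (n : ℕ) (P Q : Finset ℕ) (w : M.W) : Set Formula :=
  {φ | φ ∈ F n P Q ∧ M.Sat φ w}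

def conjList : List Formula → Formula
  | [] => Formula.top
  | φ :: l => φ.and (conjList l)

open Classical in
/-- C_n^{(P,Q)}(w) = ⋀ Th_n^{(P,Q)}(w). -/
noncomputable def Cfml (F : ℕ → Finset ℕ → Finset ℕ → List Formula) (M : KripkeModel)
    (n : ℕ) (P Q : Finset ℕ) (w : M.W) : Formula :=
  conjList ((F n P Q).filter fun φ => decide (M.Sat φ w))

/-- Layered (P,Q)-bisimulation between M and M'. -/
def LayeredBisim (P Q : Finset ℕ) (M M' : KripkeModel)
    (Z : M.W → ℕ → M'.W → Prop) : Prop :=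
  (∀ w n w', Z w n w' →
    (∀ p ∈ P, M.val w p → M'.val w' p) ∧ (∀ q ∈ Q, ¬M.val w q → ¬M'.val w' q)) ∧
  (∀ w n w', Z w (n + 1) w' → ∀ x, M.rel w x → ∃ x', M'.rel w' x' ∧ Z x n x') ∧
  (∀ w n w', Z w (n + 1) w' → ∀ x', M'.rel w' x' → ∃ x, M.rel w x ∧ Z x n x')

/-- Downward closedness of a layered bisimulation. -/
def DownClosed (M M' : KripkeModel) (Z : M.W → ℕ → M'.W → Prop) : Prop :=
  ∀ w n w', Z w n w' → ∀ m ≤ n, Z w m w'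

/-- A class of Kripke models has ULIP. -/
def ClassULIP (F : ℕ → Finset ℕ → Finset ℕ → List Formula) (Cl : Set KripkeModel) : Prop :=
  ∀ P1 P2 P3 Q1 Q2 Q3 : Finset ℕ,
    Disjoint P1 P2 → Disjoint P1 P3 → Disjoint P2 P3 →
    Disjoint Q1 Q2 → Disjoint Q1 Q3 → Disjoint Q2 Q3 →
    ∀ M : KripkeModel, M ∈ Cl → ∀ M' : KripkeModel, M' ∈ Cl →
    ∀ w : M.W, ∀ w' : M'.W, ∀ m n : ℕ,
      Th F M n P2 Q2 w ⊆ Th F M' n P2 Q2 w' →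
      ∃ Mst : KripkeModel, Mst ∈ Cl ∧ ∃ wst : Mst.W,
        Th F M n (P1 ∪ P2) (Q1 ∪ Q2) w ⊆ Th F Mst n (P1 ∪ P2) (Q1 ∪ Q2) wst ∧
        Th F Mst m (P2 ∪ P3) (Q2 ∪ Q3) wst ⊆ Th F M' m (P2 ∪ P3) (Q2 ∪ Q3) w'

lemma taut_contra1 (A B : Formula) :
    Tautology ((((A.imp .bot).imp B).imp ((B.imp .bot).imp A))) := by
  intro v hbot himp
  simp only [himp, hbot]
  cases v A <;> cases v B <;> simp

lemma taut_contra2 (A B : Formula) :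
    Tautology (((A.imp B).imp ((B.imp .bot).imp (A.imp .bot)))) := by
  intro v hbot himp
  simp only [himp, hbot]
  cases v A <;> cases v B <;> simp

lemma taut_swap (A B : Formula) :
    Tautology (((A.imp (B.imp .bot)).imp (B.imp (A.imp .bot)))) := by
  intro v hbot himp
  simp only [himp, hbot]
  cases v A <;> cases v B <;> simp

/-- If a normal modal logic enjoys ULIP, then pre-interpolants exist. -/
theorem ulip_pre_interpolants (L : Set Formula) (hL : IsNormal L) (h : ULIP L) :
    ∀ (φ : Formula) (P Q : Finset ℕ), ∃ θ' : Formula,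
      θ'.vpos ⊆ φ.vpos \ P ∧ θ'.vneg ⊆ φ.vneg \ Q ∧ θ'.imp φ ∈ L ∧
        ∀ ψ : Formula, ψ.vpos ∩ P = ∅ → ψ.vneg ∩ Q = ∅ → ψ.imp φ ∈ L → ψ.imp θ' ∈ L := by
  intro φ P Q
  obtain ⟨θ, hp, hn, himp, hmin⟩ := h (φ.imp .bot) Q P
  refine ⟨θ.imp .bot, ?_, ?_, ?_, ?_⟩
  · -- vpos (θ → ⊥) = vneg θ ⊆ vneg (φ → ⊥) \ P = vpos φ \ P
    simpa [Formula.vpos, Formula.vneg, Formula.vsgn] using hn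
  · simpa [Formula.vpos, Formula.vneg, Formula.vsgn] using hp
  · exact hL.mp _ _ (hL.taut _ (taut_contra1 φ θ)) himp
  · intro ψ hψp hψn hψφ
    have h1 : (φ.imp .bot).imp (ψ.imp .bot) ∈ L :=
      hL.mp _ _ (hL.taut _ (taut_contra2 ψ φ)) hψφ
    have h2 : θ.imp (ψ.imp .bot) ∈ L := by
      apply hmin
      · simpa [Formula.vpos, Formula.vneg, Formula.vsgn] using hψn
      · simpa [Formula.vpos, Formula.vneg, Formula.vsgn] using hψp
      · exact h1
    exact hL.mp _ _ (hL.taut _ (taut_swap θ ψ)) h2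
end

section
/- Let L₀ and L₁ be normal modal logics with L₀ ⊆ L₁ and L₁ = L₀⋆. If L₀ enjoys ULIP, then L₁ enjoys ULIP. -/
namespace UlipStarAux

open Formula

lemma vsgn_and (φ ψ : Formula) (b : Bool) :
    (φ.and ψ).vsgn b = φ.vsgn b ∪ ψ.vsgn b := by
  cases b <;> simp [Formula.and, Formula.neg, Formula.vsgn]

lemma vsgn_star (φ : Formula) (b : Bool) : φ.star.vsgn b = φ.vsgn b := by
  induction φ generalizing b with
  | var p => rfl
  | bot => rfl
  | imp φ ψ ihφ ihψ => simp [Formula.star, Formula.vsgn, ihφ, ihψ]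
  | box φ ih =>
      simp [Formula.star, vsgn_and, Formula.vsgn, ih]

lemma imp_trans {L : Set Formula} (h : IsNormal L) {a b c : Formula}
    (hab : a.imp b ∈ L) (hbc : b.imp c ∈ L) : a.imp c ∈ L := by
  have t : ((a.imp b).imp ((b.imp c).imp (a.imp c))) ∈ L := by
    apply h.taut
    intro v h0 hi
    simp only [hi]
    cases v a <;> cases v b <;> cases v c <;> simp
  exact h.mp _ _ (h.mp _ _ t hab) hbc

lemma box_mono {L : Set Formula} (h : IsNormal L) {a b : Formula}
    (hab : a.imp b ∈ L) : a.box.imp b.box ∈ L := by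
  have hK := h.subst_mem _ h.axK (fun n => if n = 0 then a else b)
  simp only [Formula.subst] at hK
  norm_num at hK
  exact h.mp _ _ hK (h.nec _ hab)

lemma imp_congr {L : Set Formula} (h : IsNormal L) {a a' b b' : Formula}
    (ha : a'.imp a ∈ L) (hb : b.imp b' ∈ L) : (a.imp b).imp (a'.imp b') ∈ L := by
  have t : ((a'.imp a).imp ((b.imp b').imp ((a.imp b).imp (a'.imp b')))) ∈ L := by
    apply h.taut
    intro v h0 hi
    simp only [hi]
    cases v a <;> cases v a' <;> cases v b <;> cases v b' <;> simp
  exact h.mp _ _ (h.mp _ _ t ha) hb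

lemma combine_and {L : Set Formula} (h : IsNormal L) {x y z : Formula}
    (h1 : x.imp y ∈ L) (h2 : y.imp z ∈ L) : x.imp (z.and y) ∈ L := by
  have t : ((x.imp y).imp ((y.imp z).imp (x.imp (z.and y)))) ∈ L := by
    apply h.taut
    intro v h0 hi
    simp only [Formula.and, Formula.neg, hi, h0]
    cases v x <;> cases v y <;> cases v z <;> simp
  exact h.mp _ _ (h.mp _ _ t h1) h2

lemma and_right_imp {L : Set Formula} (h : IsNormal L) {x y z : Formula}
    (h1 : y.imp z ∈ L) : (x.and y).imp z ∈ L := by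
  have t : ((y.imp z).imp ((x.and y).imp z)) ∈ L := by
    apply h.taut
    intro v h0 hi
    simp only [Formula.and, Formula.neg, hi, h0]
    cases v x <;> cases v y <;> cases v z <;> simp
  exact h.mp _ _ t h1

lemma self_imp {L : Set Formula} (h : IsNormal L) (a : Formula) : a.imp a ∈ L := by
  apply h.taut
  intro v h0 hi
  simp only [hi]
  cases v a <;> simp

end UlipStarAux

/-- If L₀ ⊆ L₁ = L₀⋆ and L₀ enjoys ULIP, then L₁ enjoys ULIP. -/
theorem ulip_star (L₀ L₁ : Set Formula) (h₀ : IsNormal L₀) (h₁ : IsNormal L₁)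
    (hsub : L₀ ⊆ L₁) (hstar : L₁ = starLogic L₀) (hulip : ULIP L₀) : ULIP L₁ := by
  open UlipStarAux in
  -- L₁ is reflexive
  have hrefl : ∀ a : Formula, a.box.imp a ∈ L₁ := by
    intro a
    rw [hstar]
    show Formula.star (a.box.imp a) ∈ L₀
    apply h₀.taut
    intro v h0 hi
    simp only [Formula.star, Formula.and, Formula.neg, hi, h0]
    cases v a.star <;> cases v a.star.box <;> simp
  -- star equivalence in L₁
  have hiff : ∀ a : Formula, a.imp a.star ∈ L₁ ∧ a.star.imp a ∈ L₁ := by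
    intro a
    induction a with
    | var p => exact ⟨UlipStarAux.self_imp h₁ _, UlipStarAux.self_imp h₁ _⟩
    | bot => exact ⟨UlipStarAux.self_imp h₁ _, UlipStarAux.self_imp h₁ _⟩
    | imp a b iha ihb =>
        exact ⟨UlipStarAux.imp_congr h₁ iha.2 ihb.1, UlipStarAux.imp_congr h₁ iha.1 ihb.2⟩
    | box a ih =>
        constructor
        · exact UlipStarAux.combine_and h₁ (UlipStarAux.box_mono h₁ ih.1) (hrefl a.star)
        · exact UlipStarAux.and_right_imp h₁ (UlipStarAux.box_mono h₁ ih.2)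
  intro φ P Q
  obtain ⟨θ, hp, hn, himp, huniv⟩ := hulip φ.star P Q
  refine ⟨θ, ?_, ?_, ?_, ?_⟩
  · simpa [Formula.vpos, UlipStarAux.vsgn_star] using hp
  · simpa [Formula.vneg, UlipStarAux.vsgn_star] using hn
  · exact UlipStarAux.imp_trans h₁ (hiff φ).1 (hsub himp)
  · intro ψ hψp hψn hφψ
    rw [hstar] at hφψ
    have hstarimp : φ.star.imp ψ.star ∈ L₀ := hφψ
    have hθψ : θ.imp ψ.star ∈ L₀ := by
      apply huniv
      · simpa [Formula.vpos, UlipStarAux.vsgn_star] using hψp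
      · simpa [Formula.vneg, UlipStarAux.vsgn_star] using hψn
      · exact hstarimp
    exact UlipStarAux.imp_trans h₁ (hsub hθψ) (hiff ψ).2
end

section
/- If L is a normal modal logic with K4 ⊆ L ⊆ S4, then L⋆ = S4. -/
section StarAux

open Formula

lemma t_id (A : Formula) : Tautology (A.imp A) := by
  intro v hb hi; simp [hi]

lemma t_hs (A B C : Formula) :
    Tautology ((A.imp B).imp ((B.imp C).imp (A.imp C))) := by
  intro v hb hi; simp only [hi, hb]
  cases v A <;> cases v B <;> cases v C <;> simp

lemma t_pair (A B : Formula) : Tautology (A.imp (B.imp (A.and B))) := by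
  intro v hb hi; simp only [Formula.and, Formula.neg, hi, hb]
  cases v A <;> cases v B <;> simp

lemma t_andl (A B : Formula) : Tautology ((A.and B).imp A) := by
  intro v hb hi; simp only [Formula.and, Formula.neg, hi, hb]
  cases v A <;> cases v B <;> simp

lemma t_imp_and (A B : Formula) : Tautology ((A.imp B).imp (A.imp (A.and B))) := by
  intro v hb hi; simp only [Formula.and, Formula.neg, hi, hb]
  cases v A <;> cases v B <;> simp

lemma t_frege (A B C : Formula) :
    Tautology ((A.imp (B.imp C)).imp ((A.imp B).imp (A.imp C))) := by
  intro v hb hi; simp only [hi, hb]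
  cases v A <;> cases v B <;> cases v C <;> simp

lemma t_k (A B C a b : Formula) :
    Tautology ((A.imp (B.imp C)).imp
      (((a.imp b).and A).imp ((a.and B).imp (b.and C)))) := by
  intro v hb hi; simp only [Formula.and, Formula.neg, hi, hb]
  cases v A <;> cases v B <;> cases v C <;> cases v a <;> cases v b <;> simp

lemma t_imp4 (a a' b b' : Formula) :
    Tautology ((a.imp a').imp ((b'.imp b).imp ((a'.imp b').imp (a.imp b)))) := by
  intro v hb hi; simp only [hi, hb]
  cases v a <;> cases v a' <;> cases v b <;> cases v b' <;> simp

lemma t_unbox (X Y A : Formula) :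
    Tautology ((X.imp Y).imp ((A.and X).imp Y)) := by
  intro v hb hi; simp only [Formula.and, Formula.neg, hi, hb]
  cases v X <;> cases v Y <;> cases v A <;> simp

lemma t_two (X A B : Formula) :
    Tautology ((X.imp A).imp ((X.imp B).imp (X.imp (A.and B)))) := by
  intro v hb hi; simp only [Formula.and, Formula.neg, hi, hb]
  cases v X <;> cases v A <;> cases v B <;> simp

variable {L : Set Formula}

lemma N.taut' (hL : IsNormal L) {A : Formula} (h : Tautology A) : A ∈ L := hL.taut A h

lemma N.hs (hL : IsNormal L) {A B C : Formula} (h1 : A.imp B ∈ L) (h2 : B.imp C ∈ L) :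
    A.imp C ∈ L :=
  hL.mp _ _ (hL.mp _ _ (hL.taut _ (t_hs A B C)) h1) h2

lemma N.kdist (hL : IsNormal L) (φ ψ : Formula) :
    (φ.imp ψ).box.imp (φ.box.imp ψ.box) ∈ L := by
  have := hL.subst_mem _ hL.axK (fun n => if n = 0 then φ else ψ)
  simpa [Formula.subst] using this

lemma N.box_mono (hL : IsNormal L) {φ ψ : Formula} (h : φ.imp ψ ∈ L) :
    φ.box.imp ψ.box ∈ L :=
  hL.mp _ _ (N.kdist hL φ ψ) (hL.nec _ h)

lemma N.box_and (hL : IsNormal L) (A B : Formula) :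
    A.box.imp (B.box.imp (A.and B).box) ∈ L := by
  have h1 : A.box.imp (B.imp (A.and B)).box ∈ L :=
    N.box_mono hL (hL.taut _ (t_pair A B))
  exact N.hs hL h1 (N.kdist hL B (A.and B))

/-- (φ ∧ □φ) → □(φ ∧ □φ), provable when K4 ⊆ L. -/
lemma N.fourStar (hL : IsNormal L) (h4 : ∀ φ : Formula, φ.box.imp φ.box.box ∈ L)
    (φ : Formula) : (φ.and φ.box).imp (φ.and φ.box).box ∈ L := by
  have hb : φ.box.imp (φ.box.box.imp (φ.and φ.box).box) ∈ L := N.box_and hL φ φ.box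
  have h2 : φ.box.imp (φ.and φ.box).box ∈ L :=
    hL.mp _ _ (hL.mp _ _ (hL.taut _ (t_frege φ.box φ.box.box (φ.and φ.box).box)) hb) (h4 φ)
  have h3 : (φ.and φ.box).imp φ.box ∈ L := by
    have := hL.taut _ (t_pair φ φ.box)
    -- rather: and-elim right
    exact hL.taut _ (by
      intro v hbv hi; simp only [Formula.and, Formula.neg, hi, hbv]
      cases v φ <;> cases v φ.box <;> simp)
  exact N.hs hL h3 h2

lemma star_subst (σ : ℕ → Formula) (φ : Formula) :
    (Formula.subst σ φ).star = Formula.subst (fun n => (σ n).star) φ.star := by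
  induction φ with
  | var p => rfl
  | bot => rfl
  | imp φ ψ ih1 ih2 => simp [Formula.subst, Formula.star, ih1, ih2]
  | box φ ih => simp [Formula.subst, Formula.star, Formula.and, Formula.neg, ih]

end StarAux
section StarMain

lemma normal_normalExt (X : Set Formula) : IsNormal (NormalExt X) := by
  constructor
  · intro φ h; intro L' hL'; exact hL'.1.taut φ h
  · intro L' hL'; exact hL'.1.axK
  · intro φ ψ h1 h2 L' hL'; exact hL'.1.mp φ ψ (h1 L' hL') (h2 L' hL')
  · intro φ h L' hL'; exact hL'.1.nec φ (h L' hL')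
  · intro φ h σ L' hL'; exact hL'.1.subst_mem φ (h L' hL') σ

lemma gen_mem_normalExt {X : Set Formula} {φ : Formula} (h : φ ∈ X) :
    φ ∈ NormalExt X := fun _ hL' => hL'.2 h

lemma normalExt_subset {X : Set Formula} {L : Set Formula} (hL : IsNormal L)
    (hX : X ⊆ L) : NormalExt X ⊆ L := fun _ h => h L ⟨hL, hX⟩

lemma S4_normal : IsNormal TheoryS4 := normal_normalExt _
lemma axT_S4 : axT ∈ TheoryS4 := gen_mem_normalExt (by simp)
lemma ax4_S4 : ax4 ∈ TheoryS4 := gen_mem_normalExt (by simp)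

lemma T_inst {L : Set Formula} (hL : IsNormal L) (hT : axT ∈ L) (φ : Formula) :
    φ.box.imp φ ∈ L := by
  have := hL.subst_mem _ hT (fun _ => φ)
  simpa [axT, Formula.subst] using this

lemma four_inst {L : Set Formula} (hL : IsNormal L) (h4 : ax4 ∈ L) (φ : Formula) :
    φ.box.imp φ.box.box ∈ L := by
  have := hL.subst_mem _ h4 (fun _ => φ)
  simpa [ax4, Formula.subst] using this

/-- In S4, φ⋆ ↔ φ. -/
lemma star_iff_S4 (φ : Formula) :
    φ.star.imp φ ∈ TheoryS4 ∧ φ.imp φ.star ∈ TheoryS4 := by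
  have hN := S4_normal
  induction φ with
  | var p => exact ⟨hN.taut _ (t_id _), hN.taut _ (t_id _)⟩
  | bot => exact ⟨hN.taut _ (t_id _), hN.taut _ (t_id _)⟩
  | imp φ ψ ih1 ih2 =>
    constructor
    · exact hN.mp _ _ (hN.mp _ _ (hN.taut _ (t_imp4 φ φ.star ψ ψ.star)) ih1.2) ih2.1
    · exact hN.mp _ _ (hN.mp _ _ (hN.taut _ (t_imp4 φ.star φ ψ.star ψ)) ih1.1) ih2.2
  | box φ ih =>
    constructor
    · have hm : φ.star.box.imp φ.box ∈ TheoryS4 := N.box_mono hN ih.1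
      exact hN.mp _ _ (hN.taut _ (t_unbox φ.star.box φ.box φ.star)) hm
    · have h1 : φ.box.imp φ.star ∈ TheoryS4 :=
        N.hs hN (T_inst hN axT_S4 φ) ih.2
      have h2 : φ.box.imp φ.star.box ∈ TheoryS4 := N.box_mono hN ih.2
      exact hN.mp _ _ (hN.mp _ _ (hN.taut _ (t_two φ.box φ.star φ.star.box)) h1) h2

lemma normal_starLogic {L : Set Formula} (hL : IsNormal L) :
    IsNormal (starLogic L) := by
  constructor
  · intro φ h
    refine hL.taut _ ?_
    intro v hb hi
    exact h (fun ψ => v ψ.star) hb (fun ψ θ => hi ψ.star θ.star)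
  · show (Formula.star _) ∈ L
    have ht := hL.taut _ (t_k ((Formula.var 0).imp (Formula.var 1)).box
      (Formula.var 0).box (Formula.var 1).box (Formula.var 0) (Formula.var 1))
    have := hL.mp _ _ ht hL.axK
    simpa [Formula.star] using this
  · intro φ ψ h1 h2
    exact hL.mp _ _ h1 h2
  · intro φ h
    show (φ.star.and φ.star.box) ∈ L
    exact hL.mp _ _ (hL.mp _ _ (hL.taut _ (t_pair φ.star φ.star.box)) h) (hL.nec _ h)
  · intro φ h σ
    show (Formula.subst σ φ).star ∈ L
    rw [star_subst]
    exact hL.subst_mem _ h _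

lemma axT_starLogic {L : Set Formula} (hL : IsNormal L) : axT ∈ starLogic L := by
  show (Formula.star axT) ∈ L
  refine hL.taut _ ?_
  intro v hb hi
  simp only [axT, Formula.star, Formula.and, Formula.neg, hi, hb]
  cases v (Formula.var 0) <;> cases v (Formula.var 0).box <;> simp

lemma ax4_starLogic {L : Set Formula} (hL : IsNormal L)
    (h4 : ∀ φ : Formula, φ.box.imp φ.box.box ∈ L) : ax4 ∈ starLogic L := by
  show (Formula.star ax4) ∈ L
  have hD := N.fourStar hL h4 (Formula.var 0)
  have ht := hL.taut _ (t_imp_and ((Formula.var 0).and (Formula.var 0).box)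
    ((Formula.var 0).and (Formula.var 0).box).box)
  have := hL.mp _ _ ht hD
  simpa [ax4, Formula.star] using this

end StarMain

/-- If K4 ⊆ L ⊆ S4 (L a normal modal logic), then L⋆ = S4. -/
theorem starLogic_eq_S4 (L : Set Formula) (hL : IsNormal L)
    (hK4 : TheoryK4 ⊆ L) (hS4 : L ⊆ TheoryS4) : starLogic L = TheoryS4 := by
  have h4 : ∀ φ : Formula, φ.box.imp φ.box.box ∈ L :=
    four_inst hL (hK4 (gen_mem_normalExt rfl))
  apply Set.eq_of_subset_of_subset
  · intro φ hφ
    have hst : φ.star ∈ TheoryS4 := hS4 hφ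
    exact S4_normal.mp _ _ (star_iff_S4 φ).1 hst
  · intro φ hφ
    exact hφ (starLogic L)
      ⟨normal_starLogic hL, by
        intro ψ hψ
        rcases hψ with h | h
        · exact h ▸ axT_starLogic hL
        · simp only [Set.mem_singleton_iff] at h
          exact h ▸ ax4_starLogic hL h4⟩
end

section
/- If a normal modal logic L is locally tabular and enjoys the Lyndon interpolation property (LIP), then L enjoys the uniform Lyndon interpolation property (ULIP). -/
/-- L is locally tabular: for every finite set R of variables there are only finitely
many formulas built from variables in R up to L-provable equivalence. -/
def LocallyTabular (L : Set Formula) : Prop :=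
  ∀ R : Finset ℕ, ∃ S : List Formula,
    ∀ ψ : Formula, ψ.vars ⊆ R → ∃ δ ∈ S, Formula.iff δ ψ ∈ L

section Aux

variable {L : Set Formula}

lemma imp_top_mem (hL : IsNormal L) (a : Formula) : a.imp Formula.top ∈ L := by
  apply hL.taut; intro v hb hi
  simp [Formula.top, Formula.neg, hi, hb]

lemma chain_mem (hL : IsNormal L) {a b c : Formula}
    (h1 : a.imp b ∈ L) (h2 : b.imp c ∈ L) : a.imp c ∈ L := by
  refine hL.mp _ _ (hL.mp _ _
    (hL.taut ((a.imp b).imp ((b.imp c).imp (a.imp c))) ?_) h1) h2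
  intro v hb hi
  simp only [hi]
  cases v a <;> cases v b <;> cases v c <;> simp

lemma imp_and_mem (hL : IsNormal L) {f a b : Formula}
    (h1 : f.imp a ∈ L) (h2 : f.imp b ∈ L) : f.imp (a.and b) ∈ L := by
  refine hL.mp _ _ (hL.mp _ _
    (hL.taut ((f.imp a).imp ((f.imp b).imp (f.imp (a.and b)))) ?_) h1) h2
  intro v hb hi
  simp only [Formula.and, Formula.neg, hi, hb]
  cases v f <;> cases v a <;> cases v b <;> simp

lemma and_left_mem (hL : IsNormal L) (a b : Formula) : (a.and b).imp a ∈ L := by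
  apply hL.taut; intro v hb hi
  simp only [Formula.and, Formula.neg, hi, hb]
  cases v a <;> cases v b <;> simp

lemma and_right_mem (hL : IsNormal L) (a b : Formula) : (a.and b).imp b ∈ L := by
  apply hL.taut; intro v hb hi
  simp only [Formula.and, Formula.neg, hi, hb]
  cases v a <;> cases v b <;> simp

lemma iff_fwd_mem (hL : IsNormal L) {a b : Formula} (h : Formula.iff a b ∈ L) :
    a.imp b ∈ L := hL.mp _ _ (and_left_mem hL _ _) h

lemma iff_bwd_mem (hL : IsNormal L) {a b : Formula} (h : Formula.iff a b ∈ L) :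
    b.imp a ∈ L := hL.mp _ _ (and_right_mem hL _ _) h

lemma imp_conjList_mem (hL : IsNormal L) {f : Formula} {l : List Formula}
    (h : ∀ a ∈ l, f.imp a ∈ L) : f.imp (conjList l) ∈ L := by
  induction l with
  | nil => exact imp_top_mem hL f
  | cons a l ih =>
      exact imp_and_mem hL (h a List.mem_cons_self)
        (ih fun b hb => h b (List.mem_cons_of_mem a hb))

lemma conjList_imp_mem (hL : IsNormal L) {a : Formula} {l : List Formula}
    (h : a ∈ l) : (conjList l).imp a ∈ L := by
  induction l with
  | nil => cases h
  | cons b l ih =>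
      rcases List.mem_cons.1 h with rfl | h
      · exact and_left_mem hL _ _
      · exact chain_mem hL (and_right_mem hL b (conjList l)) (ih h)

lemma vsgn_and (a b : Formula) (s : Bool) :
    (a.and b).vsgn s = a.vsgn s ∪ b.vsgn s := by
  cases s <;> simp [Formula.and, Formula.neg, Formula.vsgn]

lemma vsgn_top (s : Bool) : Formula.top.vsgn s = ∅ := by
  cases s <;> simp [Formula.top, Formula.neg, Formula.vsgn]

lemma vsgn_conjList {l : List Formula} {s : Bool} {T : Finset ℕ}
    (h : ∀ a ∈ l, a.vsgn s ⊆ T) : (conjList l).vsgn s ⊆ T := by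
  induction l with
  | nil => simp [conjList, vsgn_top]
  | cons a l ih =>
      rw [conjList, vsgn_and]
      exact Finset.union_subset (h a List.mem_cons_self)
        (ih fun b hb => h b (List.mem_cons_of_mem a hb))

end Aux

/-- A locally tabular normal modal logic with LIP enjoys ULIP. -/
theorem locally_tabular_lip_ulip (L : Set Formula) (hL : IsNormal L)
    (htab : LocallyTabular L) (hlip : LIP L) : ULIP L := by
  classical
  intro φ P Q
  obtain ⟨S, hS⟩ := htab φ.vars
  set Good : Formula → Prop := fun δ => ∃ θ' : Formula,
    θ'.vpos ⊆ φ.vpos \ P ∧ θ'.vneg ⊆ φ.vneg \ Q ∧ φ.imp θ' ∈ L ∧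
      Formula.iff δ θ' ∈ L with hGoodDef
  let f : Formula → Formula := fun δ => if h : Good δ then h.choose else Formula.top
  have hf : ∀ δ, (f δ).vpos ⊆ φ.vpos \ P ∧ (f δ).vneg ⊆ φ.vneg \ Q ∧
      φ.imp (f δ) ∈ L := by
    intro δ
    by_cases h : Good δ
    · simp only [f, dif_pos h]
      exact ⟨h.choose_spec.1, h.choose_spec.2.1, h.choose_spec.2.2.1⟩
    · simp only [f, dif_neg h]
      refine ⟨?_, ?_, imp_top_mem hL φ⟩ <;>
        simp [Formula.vpos, Formula.vneg, vsgn_top]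
  refine ⟨conjList (S.map f), ?_, ?_, ?_, ?_⟩
  · exact vsgn_conjList (by
      intro a ha
      obtain ⟨δ, _, rfl⟩ := List.mem_map.1 ha
      exact (hf δ).1)
  · exact vsgn_conjList (by
      intro a ha
      obtain ⟨δ, _, rfl⟩ := List.mem_map.1 ha
      exact (hf δ).2.1)
  · exact imp_conjList_mem hL (by
      intro a ha
      obtain ⟨δ, _, rfl⟩ := List.mem_map.1 ha
      exact (hf δ).2.2)
  · intro ψ hp hq hφψ
    obtain ⟨θψ, hθp, hθn, hφθ, hθψ⟩ := hlip φ ψ hφψ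
    have hθvars : θψ.vars ⊆ φ.vars := by
      apply Finset.union_subset
      · exact (hθp.trans (Finset.inter_subset_left)).trans Finset.subset_union_left
      · exact (hθn.trans (Finset.inter_subset_left)).trans Finset.subset_union_right
    obtain ⟨δ, hδS, hiff⟩ := hS θψ hθvars
    have hGood : Good δ := by
      refine ⟨θψ, ?_, ?_, hφθ, hiff⟩
      · intro x hx
        have h1 := hθp hx
        rw [Finset.mem_inter] at h1
        refine Finset.mem_sdiff.2 ⟨h1.1, fun hxP => ?_⟩
        have : x ∈ ψ.vpos ∩ P := Finset.mem_inter.2 ⟨h1.2, hxP⟩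
        rw [hp] at this; exact absurd this (Finset.notMem_empty x)
      · intro x hx
        have h1 := hθn hx
        rw [Finset.mem_inter] at h1
        refine Finset.mem_sdiff.2 ⟨h1.1, fun hxQ => ?_⟩
        have : x ∈ ψ.vneg ∩ Q := Finset.mem_inter.2 ⟨h1.2, hxQ⟩
        rw [hq] at this; exact absurd this (Finset.notMem_empty x)
    have hmem : f δ ∈ S.map f := List.mem_map_of_mem hδS
    have h1 : (conjList (S.map f)).imp (f δ) ∈ L := conjList_imp_mem hL hmem
    have hfδ : f δ = hGood.choose := dif_pos hGood
    have h2 : (f δ).imp δ ∈ L := by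
      rw [hfδ]; exact iff_bwd_mem hL hGood.choose_spec.2.2.2
    have h3 : δ.imp θψ ∈ L := iff_fwd_mem hL hiff
    exact chain_mem hL (chain_mem hL (chain_mem hL h1 h2) h3) hθψ
end

section
/- Let X be a set of constant modal formulas (formulas φ with v(φ)=∅) and let L be a normal modal logic enjoying ULIP. Then L + X enjoys ULIP; moreover, every uniform Lyndon interpolant of (φ,P,Q) in L is also a uniform Lyndon interpolant of (φ,P,Q) in L + X. -/
/-! ### Auxiliary material for the constant-extension theorem -/

namespace ULIPAux

open Formula

/-- Iterated box. -/
def boxIter : ℕ → Formula → Formula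
  | 0, φ => φ
  | n + 1, φ => (boxIter n φ).box

/-- `c` is an iterated box of an axiom from `X`. -/
def BoxedAx (X : Set Formula) (c : Formula) : Prop :=
  ∃ χ ∈ X, ∃ n, c = boxIter n χ

/-- Formulas derivable in `L` from finitely many boxed `X`-axioms. -/
def DerivSet (L X : Set Formula) : Set Formula :=
  {α | ∃ l : List Formula, (∀ c ∈ l, BoxedAx X c) ∧ l.foldr Formula.imp α ∈ L}

lemma foldr_eval (v : Formula → Bool)
    (hi : ∀ ψ θ : Formula, v (ψ.imp θ) = (!v ψ || v θ)) :
    ∀ (l : List Formula) (α : Formula),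
      v (l.foldr Formula.imp α) = (!l.all (fun c => v c) || v α)
  | [], α => by simp
  | c :: l, α => by
    show v (c.imp (l.foldr Formula.imp α)) = _
    rw [hi, foldr_eval v hi l α, List.all_cons, Bool.not_and, Bool.or_assoc]

lemma taut_self (A : Formula) : Tautology (A.imp A) := by
  intro v _ hi
  rw [hi]
  cases v A <;> rfl

lemma taut_chain (A B C D : Formula) :
    Tautology ((C.imp D).imp ((A.imp (B.imp C)).imp (A.imp (B.imp D)))) := by
  intro v _ hi
  simp only [hi]
  cases v A <;> cases v B <;> cases v C <;> cases v D <;> rfl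

lemma taut_fold1 (l : List Formula) (α β : Formula) :
    Tautology ((α.imp β).imp ((l.foldr Formula.imp α).imp (l.foldr Formula.imp β))) := by
  intro v _ hi
  simp only [hi, foldr_eval v hi]
  cases l.all (fun c => v c) <;> cases v α <;> cases v β <;> rfl

lemma taut_fold2 (l : List Formula) (φ ψ : Formula) :
    Tautology ((l.foldr Formula.imp φ).imp
      ((φ.imp ψ).imp (l.foldr Formula.imp ψ))) := by
  intro v _ hi
  simp only [hi, foldr_eval v hi]
  cases l.all (fun c => v c) <;> cases v φ <;> cases v ψ <;> rfl

lemma taut_swap (l : List Formula) (φ ψ : Formula) :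
    Tautology ((l.foldr Formula.imp (φ.imp ψ)).imp
      (φ.imp (l.foldr Formula.imp ψ))) := by
  intro v _ hi
  simp only [hi, foldr_eval v hi]
  cases l.all (fun c => v c) <;> cases v φ <;> cases v ψ <;> rfl

lemma taut_swap' (l : List Formula) (φ ψ : Formula) :
    Tautology ((φ.imp (l.foldr Formula.imp ψ)).imp
      (l.foldr Formula.imp (φ.imp ψ))) := by
  intro v _ hi
  simp only [hi, foldr_eval v hi]
  cases l.all (fun c => v c) <;> cases v φ <;> cases v ψ <;> rfl

variable {L X : Set Formula}

lemma taut_mp (hL : IsNormal L) {A B : Formula} (h : Tautology (A.imp B))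
    (hA : A ∈ L) : B ∈ L :=
  hL.mp _ _ (hL.taut _ h) hA

lemma taut_mp2 (hL : IsNormal L) {A B C : Formula}
    (h : Tautology (A.imp (B.imp C))) (hA : A ∈ L) (hB : B ∈ L) : C ∈ L :=
  hL.mp _ _ (taut_mp hL h hA) hB

/-- If `α → β` is in `L`, derivability under hypotheses is preserved. -/
lemma foldr_mem_imp (hL : IsNormal L) {l : List Formula} {α β : Formula}
    (h : α.imp β ∈ L) (hα : l.foldr Formula.imp α ∈ L) :
    l.foldr Formula.imp β ∈ L :=
  taut_mp2 hL (taut_fold1 l α β) h hα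

/-- Instance of the K axiom. -/
lemma axK_inst (hL : IsNormal L) (A B : Formula) :
    ((A.imp B).box).imp ((A.box).imp (B.box)) ∈ L := by
  have := hL.subst_mem _ hL.axK (fun n => if n = 0 then A else B)
  simpa [Formula.subst] using this

/-- Distributing box over a foldr of implications. -/
lemma box_foldr (hL : IsNormal L) :
    ∀ (l : List Formula) (α : Formula),
      ((l.foldr Formula.imp α).box).imp
        ((l.map Formula.box).foldr Formula.imp α.box) ∈ L
  | [], α => hL.taut _ (taut_self α.box)
  | c :: l, α => by
    have S := axK_inst hL c (l.foldr Formula.imp α)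
    have I := box_foldr hL l α
    exact taut_mp2 hL
      (taut_chain ((c.imp (l.foldr Formula.imp α)).box) c.box
        ((l.foldr Formula.imp α).box) ((l.map Formula.box).foldr Formula.imp α.box)) I S

lemma vsgn_boxIter (n : ℕ) (φ : Formula) (b : Bool) :
    (boxIter n φ).vsgn b = φ.vsgn b := by
  induction n with
  | zero => rfl
  | succ n ih => simpa [boxIter, Formula.vsgn] using ih

lemma vsgn_empty_of_vars_empty {φ : Formula} (h : φ.vars = ∅) (b : Bool) :
    φ.vsgn b = ∅ := by
  have : φ.vsgn true = ∅ ∧ φ.vsgn false = ∅ := by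
    have := Finset.union_eq_empty.mp h
    exact ⟨this.1, this.2⟩
  cases b
  · exact this.2
  · exact this.1

lemma subst_of_vsgn_empty (σ : ℕ → Formula) :
    ∀ {φ : Formula}, (∀ b, φ.vsgn b = ∅) → Formula.subst σ φ = φ := by
  intro φ
  induction φ with
  | var p =>
    intro h
    have := h true
    simp [Formula.vsgn] at this
  | bot => intro _; rfl
  | imp φ ψ ihφ ihψ =>
    intro h
    have hφ : ∀ b, φ.vsgn b = ∅ := by
      intro b
      have := Finset.union_eq_empty.mp (h (!b))
      simpa using this.1
    have hψ : ∀ b, ψ.vsgn b = ∅ := by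
      intro b
      have := Finset.union_eq_empty.mp (h b)
      exact this.2
    simp [Formula.subst, ihφ hφ, ihψ hψ]
  | box φ ih =>
    intro h
    have hφ : ∀ b, φ.vsgn b = ∅ := fun b => h b
    simp [Formula.subst, ih hφ]

lemma boxedAx_vsgn (hX : ∀ χ ∈ X, Formula.vars χ = ∅) {c : Formula}
    (hc : BoxedAx X c) (b : Bool) : c.vsgn b = ∅ := by
  obtain ⟨χ, hχ, n, rfl⟩ := hc
  rw [vsgn_boxIter]
  exact vsgn_empty_of_vars_empty (hX χ hχ) b

lemma foldr_vsgn {l : List Formula} (hl : ∀ c ∈ l, ∀ b, c.vsgn b = ∅)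
    (α : Formula) (b : Bool) :
    (l.foldr Formula.imp α).vsgn b = α.vsgn b := by
  induction l with
  | nil => rfl
  | cons c l ih =>
    have hc := hl c (by simp)
    have hrest : ∀ c' ∈ l, ∀ b, c'.vsgn b = ∅ := fun c' hc' => hl c' (by simp [hc'])
    show ((c.imp (l.foldr Formula.imp α)).vsgn b) = _
    simp [Formula.vsgn, hc, ih hrest]

lemma subst_foldr (σ : ℕ → Formula) {l : List Formula}
    (hl : ∀ c ∈ l, Formula.subst σ c = c) (α : Formula) :
    Formula.subst σ (l.foldr Formula.imp α) = l.foldr Formula.imp (Formula.subst σ α) := by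
  induction l with
  | nil => rfl
  | cons c l ih =>
    have hrest : ∀ c' ∈ l, Formula.subst σ c' = c' := fun c' hc' => hl c' (by simp [hc'])
    show Formula.subst σ (c.imp (l.foldr Formula.imp α)) = _
    simp [Formula.subst, hl c (by simp), ih hrest]

/-- `DerivSet L X` is a normal modal logic. -/
lemma isNormal_derivSet (hL : IsNormal L) (hX : ∀ χ ∈ X, Formula.vars χ = ∅) :
    IsNormal (DerivSet L X) := by
  constructor
  · intro φ hφ
    exact ⟨[], by simp, hL.taut φ hφ⟩
  · exact ⟨[], by simp, hL.axK⟩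
  · rintro φ ψ ⟨l₁, hb₁, h₁⟩ ⟨l₂, hb₂, h₂⟩
    refine ⟨l₁ ++ l₂, ?_, ?_⟩
    · intro c hc
      rcases List.mem_append.mp hc with hc | hc
      · exact hb₁ c hc
      · exact hb₂ c hc
    · rw [List.foldr_append]
      have h₃ : (φ.imp ψ).imp (l₂.foldr Formula.imp ψ) ∈ L :=
        taut_mp hL (taut_fold2 l₂ φ ψ) h₂
      exact foldr_mem_imp hL h₃ h₁
  · rintro φ ⟨l, hb, hf⟩
    refine ⟨l.map Formula.box, ?_, ?_⟩
    · intro c hc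
      obtain ⟨c', hc', rfl⟩ := List.mem_map.mp hc
      obtain ⟨χ, hχ, n, rfl⟩ := hb c' hc'
      exact ⟨χ, hχ, n + 1, rfl⟩
    · exact hL.mp _ _ (box_foldr hL l φ) (hL.nec _ hf)
  · rintro φ ⟨l, hb, hf⟩ σ
    refine ⟨l, hb, ?_⟩
    have hfix : ∀ c ∈ l, Formula.subst σ c = c := fun c hc =>
      subst_of_vsgn_empty σ (boxedAx_vsgn hX (hb c hc))
    have := hL.subst_mem _ hf σ
    rwa [subst_foldr σ hfix] at this

lemma isNormal_normalExt (Y : Set Formula) : IsNormal (NormalExt Y) := by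
  constructor
  · intro φ hφ M hM
    exact hM.1.taut φ hφ
  · intro M hM
    exact hM.1.axK
  · intro φ ψ h₁ h₂ M hM
    exact hM.1.mp φ ψ (h₁ M hM) (h₂ M hM)
  · intro φ h₁ M hM
    exact hM.1.nec φ (h₁ M hM)
  · intro φ h₁ σ M hM
    exact hM.1.subst_mem φ (h₁ M hM) σ

lemma subset_normalExt (Y : Set Formula) : Y ⊆ NormalExt Y := by
  intro χ hχ M hM
  exact hM.2 hχ

lemma normalExt_least {Y M : Set Formula} (hM : IsNormal M) (hYM : Y ⊆ M) :
    NormalExt Y ⊆ M := fun α hα => hα M ⟨hM, hYM⟩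

/-- The key characterization. -/
lemma normalExt_eq_derivSet (hL : IsNormal L) (hX : ∀ χ ∈ X, Formula.vars χ = ∅) :
    NormalExt (L ∪ X) = DerivSet L X := by
  apply Set.Subset.antisymm
  · apply normalExt_least (isNormal_derivSet hL hX)
    rintro χ (hχ | hχ)
    · exact ⟨[], by simp, hχ⟩
    · refine ⟨[χ], ?_, hL.taut _ (taut_self χ)⟩
      intro c hc
      rw [List.mem_singleton] at hc
      exact ⟨χ, hχ, 0, hc⟩
  · rintro α ⟨l, hb, hf⟩
    have hN := isNormal_normalExt (L ∪ X)
    have hmem : ∀ c ∈ l, c ∈ NormalExt (L ∪ X) := by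
      intro c hc
      obtain ⟨χ, hχ, n, rfl⟩ := hb c hc
      clear hc
      induction n with
      | zero => exact subset_normalExt _ (Or.inr hχ)
      | succ n ih => exact hN.nec _ ih
    have hf' : l.foldr Formula.imp α ∈ NormalExt (L ∪ X) :=
      subset_normalExt (L ∪ X) (Or.inl hf)
    clear hb hf
    induction l with
    | nil => exact hf'
    | cons c l ih =>
      exact ih (fun c' hc' => hmem c' (by simp [hc']))
        (hN.mp _ _ hf' (hmem c (by simp)))

end ULIPAux

/-- Extending a normal modal logic with ULIP by constant axioms preserves ULIP,
and uniform Lyndon interpolants are preserved. -/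
theorem ulip_constant_extension (L X : Set Formula) (hL : IsNormal L)
    (hX : ∀ χ ∈ X, Formula.vars χ = ∅) (h : ULIP L) :
    ULIP (NormalExt (L ∪ X)) ∧
      ∀ (φ : Formula) (P Q : Finset ℕ) (θ : Formula),
        IsULInterpolant L φ P Q θ → IsULInterpolant (NormalExt (L ∪ X)) φ P Q θ := by
  open ULIPAux in
  have hEq : NormalExt (L ∪ X) = DerivSet L X := normalExt_eq_derivSet hL hX
  have key : ∀ (φ : Formula) (P Q : Finset ℕ) (θ : Formula),
      IsULInterpolant L φ P Q θ → IsULInterpolant (NormalExt (L ∪ X)) φ P Q θ := by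
    rintro φ P Q θ ⟨hpos, hneg, himp, hmin⟩
    refine ⟨hpos, hneg, ?_, ?_⟩
    · rw [hEq]
      exact ⟨[], by simp, himp⟩
    · intro ψ hP hQ hψ
      rw [hEq] at hψ ⊢
      obtain ⟨l, hb, hf⟩ := hψ
      have hconst : ∀ c ∈ l, ∀ b, c.vsgn b = ∅ := fun c hc =>
        boxedAx_vsgn hX (hb c hc)
      -- φ → (l ⇒ ψ) in L
      have h1 : φ.imp (l.foldr Formula.imp ψ) ∈ L :=
        taut_mp hL (taut_swap l φ ψ) hf
      -- variable conditions for l ⇒ ψ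
      have hvpos : (l.foldr Formula.imp ψ).vpos ∩ P = ∅ := by
        unfold Formula.vpos
        rw [foldr_vsgn hconst]
        exact hP
      have hvneg : (l.foldr Formula.imp ψ).vneg ∩ Q = ∅ := by
        unfold Formula.vneg
        rw [foldr_vsgn hconst]
        exact hQ
      have h2 : θ.imp (l.foldr Formula.imp ψ) ∈ L := hmin _ hvpos hvneg h1
      exact ⟨l, hb, taut_mp hL (taut_swap' l θ ψ) h2⟩
  refine ⟨?_, key⟩
  intro φ P Q
  obtain ⟨θ, hθ⟩ := h φ P Q
  exact ⟨θ, key φ P Q θ hθ⟩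
end

section
/- Let P, Q be finite sets of propositional variables, let M=(W,≺,⊩) and M'=(W',≺',⊩') be Kripke models, and let w ∈ W, w' ∈ W', n ∈ ω. Then the following are equivalent: (1) Th_n^{(P,Q)}(w) ⊆ Th_n^{(P,Q)}(w'); (2) there exists a layered (P,Q)-bisimulation Z between M and M' with (w,n,w') ∈ Z; (3) there exists a downward closed layered (P,Q)-bisimulation Z between M and M' with (w,n,w') ∈ Z. -/
section LayeredAux

open Formula

lemma sat_neg (M : KripkeModel) (φ : Formula) (w : M.W) :
    M.Sat φ.neg w ↔ ¬ M.Sat φ w := by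
  simp [Formula.neg, KripkeModel.Sat]

lemma sat_and (M : KripkeModel) (φ ψ : Formula) (w : M.W) :
    M.Sat (φ.and ψ) w ↔ M.Sat φ w ∧ M.Sat ψ w := by
  simp [Formula.and, Formula.neg, KripkeModel.Sat]

lemma sat_dia (M : KripkeModel) (φ : Formula) (w : M.W) :
    M.Sat φ.dia w ↔ ∃ x, M.rel w x ∧ M.Sat φ x := by
  simp only [Formula.dia, sat_neg, KripkeModel.Sat]
  constructor
  · intro h
    by_contra h2
    push_neg at h2
    exact h fun x hx => by simpa [sat_neg] using h2 x hx
  · rintro ⟨x, hx, hs⟩ h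
    exact (sat_neg M φ x).1 (h x hx) hs

/-- Substituted model. -/
def substModel (M : KripkeModel) (σ : ℕ → Formula) : KripkeModel :=
  ⟨M.W, M.nonempty, M.rel, fun w p => M.Sat (σ p) w⟩

lemma sat_subst (M : KripkeModel) (σ : ℕ → Formula) :
    ∀ (φ : Formula) (w : M.W), M.Sat (φ.subst σ) w ↔ (substModel M σ).Sat φ w := by
  intro φ
  induction φ with
  | var p => intro w; rfl
  | bot => intro w; rfl
  | imp φ ψ ihφ ihψ =>
      intro w
      simp only [Formula.subst, KripkeModel.Sat, ihφ, ihψ]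
  | box φ ih =>
      intro w
      simp only [Formula.subst, KripkeModel.Sat]
      exact forall_congr' fun x => imp_congr Iff.rfl (ih x)

/-- Validity on all Kripke models. -/
def KValid (φ : Formula) : Prop := ∀ (M : KripkeModel) (w : M.W), M.Sat φ w

open Classical in
lemma isNormal_valid : IsNormal {φ | KValid φ} := by
  constructor
  · intro φ hφ M w
    have h := hφ (fun ψ => decide (M.Sat ψ w))
      (by simp [KripkeModel.Sat]; exact @decide_eq_false _ (Classical.propDecidable _) id)
      (by
        intro ψ θ
        by_cases h1 : M.Sat ψ w <;> by_cases h2 : M.Sat θ w <;>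
          simp [KripkeModel.Sat, h1, h2])
    exact of_decide_eq_true h
  · intro M w h1 h2 x hx
    exact (h1 x hx) (h2 x hx)
  · intro φ ψ h1 h2 M w
    exact h1 M w (h2 M w)
  · intro φ h M w x _
    exact h M x
  · intro φ h σ M w
    exact (sat_subst M σ φ w).2 (h (substModel M σ) w)

lemma K_sound {φ : Formula} (h : φ ∈ TheoryK) : KValid φ :=
  h {φ | KValid φ} ⟨isNormal_valid, Set.empty_subset _⟩

lemma sat_of_iff {φ ψ : Formula} (h : Formula.iff φ ψ ∈ TheoryK)
    (M : KripkeModel) (w : M.W) : M.Sat φ w ↔ M.Sat ψ w := by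
  have := K_sound h M w
  rw [Formula.iff, sat_and] at this
  exact ⟨this.1, this.2⟩

lemma sat_conjList (M : KripkeModel) (w : M.W) :
    ∀ l : List Formula, M.Sat (conjList l) w ↔ ∀ φ ∈ l, M.Sat φ w := by
  intro l
  induction l with
  | nil => simp [conjList, Formula.top, sat_neg, KripkeModel.Sat]
  | cons φ l ih => simp [conjList, sat_and, ih]

def disjList : List Formula → Formula
  | [] => Formula.bot
  | φ :: l => φ.neg.imp (disjList l)

lemma sat_disjList (M : KripkeModel) (w : M.W) :
    ∀ l : List Formula, M.Sat (disjList l) w ↔ ∃ φ ∈ l, M.Sat φ w := by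
  intro l
  induction l with
  | nil => simp [disjList, KripkeModel.Sat]
  | cons φ l ih =>
      simp only [disjList, KripkeModel.Sat, sat_neg, ih, List.mem_cons]
      constructor
      · intro h
        by_cases hφ : M.Sat φ w
        · exact ⟨φ, Or.inl rfl, hφ⟩
        · obtain ⟨ψ, h1, h2⟩ := h hφ
          exact ⟨ψ, Or.inr h1, h2⟩
      · rintro ⟨ψ, (rfl | h1), h2⟩
        · intro h; exact absurd h2 h
        · intro _; exact ⟨ψ, h1, h2⟩

lemma pq_neg {P Q : Finset ℕ} {φ : Formula} (h : PQFormula Q P φ) :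
    PQFormula P Q φ.neg := by
  obtain ⟨h1, h2⟩ := h
  exact ⟨by simpa [Formula.neg, vpos, vneg, vsgn] using h2,
    by simpa [Formula.neg, vpos, vneg, vsgn] using h1⟩

lemma pq_and {P Q : Finset ℕ} {φ ψ : Formula} (h1 : PQFormula P Q φ)
    (h2 : PQFormula P Q ψ) : PQFormula P Q (φ.and ψ) := by
  obtain ⟨a1, a2⟩ := h1; obtain ⟨b1, b2⟩ := h2
  constructor <;>
    simp_all [Formula.and, Formula.neg, vpos, vneg, vsgn, Finset.union_subset_iff]

lemma pq_imp {P Q : Finset ℕ} {φ ψ : Formula} (h1 : PQFormula Q P φ)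
    (h2 : PQFormula P Q ψ) : PQFormula P Q (φ.imp ψ) := by
  obtain ⟨a1, a2⟩ := h1; obtain ⟨b1, b2⟩ := h2
  constructor <;>
    simp_all [vpos, vneg, vsgn, Finset.union_subset_iff]

lemma pq_box {P Q : Finset ℕ} {φ : Formula} (h : PQFormula P Q φ) :
    PQFormula P Q φ.box := h

lemma pq_dia {P Q : Finset ℕ} {φ : Formula} (h : PQFormula P Q φ) :
    PQFormula P Q φ.dia := pq_neg (pq_neg h)

lemma pq_bot {P Q : Finset ℕ} : PQFormula P Q Formula.bot :=
  ⟨by simp [vpos, vsgn], by simp [vneg, vsgn]⟩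

lemma pq_conjList {P Q : Finset ℕ} : ∀ l : List Formula,
    (∀ φ ∈ l, PQFormula P Q φ) → PQFormula P Q (conjList l) := by
  intro l
  induction l with
  | nil => intro _; exact pq_neg (pq_neg (pq_neg pq_bot))
  | cons φ l ih =>
      intro h
      exact pq_and (h φ (by simp)) (ih fun ψ hψ => h ψ (by simp [hψ]))

lemma pq_disjList {P Q : Finset ℕ} : ∀ l : List Formula,
    (∀ φ ∈ l, PQFormula P Q φ) → PQFormula P Q (disjList l) := by
  intro l
  induction l with
  | nil => intro _; exact pq_bot
  | cons φ l ih =>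
      intro h
      exact pq_imp (pq_neg (h φ (by simp))) (ih fun ψ hψ => h ψ (by simp [hψ]))

lemma depth_neg (φ : Formula) : φ.neg.depth = φ.depth := by
  simp [Formula.neg, depth]

lemma depth_and (φ ψ : Formula) : (φ.and ψ).depth = max φ.depth ψ.depth := by
  simp [Formula.and, depth, depth_neg]

lemma depth_dia (φ : Formula) : φ.dia.depth = φ.depth + 1 := by
  simp [Formula.dia, depth, depth_neg]

lemma depth_conjList {n : ℕ} : ∀ l : List Formula,
    (∀ φ ∈ l, φ.depth ≤ n) → (conjList l).depth ≤ n := by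
  intro l
  induction l with
  | nil => intro _; simp [conjList, Formula.top, depth_neg, depth]
  | cons φ l ih =>
      intro h
      rw [conjList, depth_and]
      exact max_le (h φ (by simp)) (ih fun ψ hψ => h ψ (by simp [hψ]))

lemma depth_disjList {n : ℕ} : ∀ l : List Formula,
    (∀ φ ∈ l, φ.depth ≤ n) → (disjList l).depth ≤ n := by
  intro l
  induction l with
  | nil => intro _; simp [disjList, depth]
  | cons φ l ih =>
      intro h
      rw [disjList]
      show max _ _ ≤ n
      rw [depth_neg]
      exact max_le (h φ (by simp)) (ih fun ψ hψ => h ψ (by simp [hψ]))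

/-- Transfer of truth for bounded-depth (P,Q)-formulas along theory inclusion. -/
lemma th_transfer {F : ℕ → Finset ℕ → Finset ℕ → List Formula} (hF : IsFamily F)
    {P Q : Finset ℕ} {M M' : KripkeModel} {w : M.W} {w' : M'.W} {n : ℕ}
    (h : Th F M n P Q w ⊆ Th F M' n P Q w')
    {φ : Formula} (hpq : PQFormula P Q φ) (hd : φ.depth ≤ n)
    (hs : M.Sat φ w) : M'.Sat φ w' := by
  obtain ⟨ψ, hmem, hiff⟩ := (hF n P Q).2 φ hpq hd
  have h1 : M.Sat ψ w := (sat_of_iff hiff M w).2 hs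
  have h2 : ψ ∈ Th F M' n P Q w' := h ⟨hmem, h1⟩
  exact (sat_of_iff hiff M' w').1 h2.2

lemma pq_imp_inv {P Q : Finset ℕ} {φ ψ : Formula} (h : PQFormula P Q (φ.imp ψ)) :
    PQFormula Q P φ ∧ PQFormula P Q ψ := by
  obtain ⟨h1, h2⟩ := h
  simp only [vpos, vneg, vsgn, Bool.not_true, Bool.not_false,
    Finset.union_subset_iff] at h1 h2
  exact ⟨⟨h2.1, h1.1⟩, ⟨h1.2, h2.2⟩⟩

lemma bisim_transfer {P Q : Finset ℕ} {M M' : KripkeModel}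
    {Z : M.W → ℕ → M'.W → Prop} (hZ : LayeredBisim P Q M M' Z) :
    ∀ (φ : Formula) (n : ℕ) (w : M.W) (w' : M'.W), φ.depth ≤ n → Z w n w' →
      (PQFormula P Q φ → M.Sat φ w → M'.Sat φ w') ∧
      (PQFormula Q P φ → M'.Sat φ w' → M.Sat φ w) := by
  obtain ⟨hatom, hzig, hzag⟩ := hZ
  intro φ
  induction φ with
  | var p =>
      intro n w w' _ hz
      constructor
      · intro hpq hs
        exact (hatom w n w' hz).1 p (hpq.1 (by simp [vpos, vsgn])) hs
      · intro hpq hs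
        by_contra h
        exact (hatom w n w' hz).2 p (hpq.1 (by simp [vpos, vsgn])) h hs
  | bot => intro n w w' _ _; exact ⟨fun _ h => h, fun _ h => h⟩
  | imp φ ψ ihφ ihψ =>
      intro n w w' hd hz
      have hdφ : φ.depth ≤ n := le_trans (le_max_left _ _) hd
      have hdψ : ψ.depth ≤ n := le_trans (le_max_right _ _) hd
      constructor
      · intro hpq hs hφ'
        obtain ⟨hA, hB⟩ := pq_imp_inv hpq
        exact (ihψ n w w' hdψ hz).1 hB (hs ((ihφ n w w' hdφ hz).2 hA hφ'))
      · intro hpq hs hφ'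
        obtain ⟨hA, hB⟩ := pq_imp_inv hpq
        exact (ihψ n w w' hdψ hz).2 hB (hs ((ihφ n w w' hdφ hz).1 hA hφ'))
  | box φ ih =>
      intro n w w' hd hz
      cases n with
      | zero => exact absurd hd (by simp [depth])
      | succ m =>
          have hdφ : φ.depth ≤ m := by
            have : φ.depth + 1 ≤ m + 1 := hd
            omega
          constructor
          · intro hpq hs x' hx'
            obtain ⟨x, hx, hzx⟩ := hzag w m w' hz x' hx'
            exact (ih m x x' hdφ hzx).1 hpq (hs x hx)
          · intro hpq hs x hx
            obtain ⟨x', hx', hzx⟩ := hzig w m w' hz x hx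
            exact (ih m x x' hdφ hzx).2 hpq (hs x' hx')

end LayeredAux
/-- Theorem on layered (P,Q)-bisimulations: theory inclusion up to depth n is
equivalent to the existence of a (downward closed) layered (P,Q)-bisimulation
relating w and w' at level n. -/
theorem layered_bisim_tfae (F : ℕ → Finset ℕ → Finset ℕ → List Formula) (hF : IsFamily F)
    (P Q : Finset ℕ) (M M' : KripkeModel) (w : M.W) (w' : M'.W) (n : ℕ) :
    List.TFAE
      [Th F M n P Q w ⊆ Th F M' n P Q w',
       ∃ Z : M.W → ℕ → M'.W → Prop, LayeredBisim P Q M M' Z ∧ Z w n w',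
       ∃ Z : M.W → ℕ → M'.W → Prop,
         LayeredBisim P Q M M' Z ∧ DownClosed M M' Z ∧ Z w n w'] := by
  open Classical in
  tfae_have 1 → 3 := by
    intro h1
    refine ⟨fun v k v' => Th F M k P Q v ⊆ Th F M' k P Q v', ⟨?_, ?_, ?_⟩, ?_, h1⟩
    · -- atoms
      intro v k v' hz
      constructor
      · intro p hp hv
        have hpq : PQFormula P Q (Formula.var p) :=
          ⟨by simpa [Formula.vpos, Formula.vsgn] using hp,
           by simp [Formula.vneg, Formula.vsgn]⟩
        exact th_transfer hF hz hpq (Nat.zero_le _) hv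
      · intro q hq hv hv'
        have hpq : PQFormula P Q (Formula.var q).neg :=
          pq_neg ⟨by simpa [Formula.vpos, Formula.vsgn] using hq,
            by simp [Formula.vneg, Formula.vsgn]⟩
        have hd : (Formula.var q).neg.depth ≤ k := by
          simp [depth_neg, Formula.depth]
        have := th_transfer hF hz hpq hd ((sat_neg M _ v).2 hv)
        exact (sat_neg M' _ v').1 this hv'
    · -- zig
      intro v k v' hz x hx
      set C : Formula := Cfml F M k P Q x with hC
      have hmemf : ∀ φ ∈ (F k P Q).filter fun φ => decide (M.Sat φ x),
          φ ∈ F k P Q ∧ M.Sat φ x := by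
        intro φ hφ
        simpa [List.mem_filter] using hφ
      have hpqC : PQFormula P Q C :=
        pq_conjList _ fun φ hφ => ((hF k P Q).1 φ (hmemf φ hφ).1).1
      have hdC : C.depth ≤ k :=
        depth_conjList _ fun φ hφ => ((hF k P Q).1 φ (hmemf φ hφ).1).2
      have hsatC : M.Sat C x :=
        (sat_conjList M x _).2 fun φ hφ => (hmemf φ hφ).2
      have hdia : M.Sat C.dia v := (sat_dia M C v).2 ⟨x, hx, hsatC⟩
      have hdia' : M'.Sat C.dia v' :=
        th_transfer hF hz (pq_dia hpqC) (by rw [depth_dia]; omega) hdia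
      obtain ⟨x', hx', hsatC'⟩ := (sat_dia M' C v').1 hdia'
      refine ⟨x', hx', ?_⟩
      rintro φ ⟨hmem, hs⟩
      refine ⟨hmem, ?_⟩
      have := (sat_conjList M' x' _).1 hsatC' φ
        (by simp [List.mem_filter, hmem, hs])
      exact this
    · -- zag
      intro v k v' hz x' hx'
      by_contra hcon
      push_neg at hcon
      set l : List Formula := (F k P Q).filter fun φ => decide (¬ M'.Sat φ x')
        with hl
      have hmemf : ∀ φ ∈ l, φ ∈ F k P Q ∧ ¬ M'.Sat φ x' := by
        intro φ hφ
        simpa [hl, List.mem_filter] using hφ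
      have hsatD : M.Sat (disjList l).box v := by
        intro x hx
        obtain ⟨φ, hφ1, hφ2⟩ := Set.not_subset.1 (hcon x hx)
        obtain ⟨hmem, hs⟩ := hφ1
        have hns : ¬ M'.Sat φ x' := fun h => hφ2 ⟨hmem, h⟩
        exact (sat_disjList M x l).2 ⟨φ, by simp [hl, List.mem_filter, hmem, hns], hs⟩
      have hpqD : PQFormula P Q (disjList l).box :=
        pq_box (pq_disjList _ fun φ hφ => ((hF k P Q).1 φ (hmemf φ hφ).1).1)
      have hdD : (disjList l).box.depth ≤ k + 1 := by
        have := depth_disjList (n := k) l fun φ hφ => ((hF k P Q).1 φ (hmemf φ hφ).1).2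
        simpa [Formula.depth] using this
      have hD' : M'.Sat (disjList l).box v' := th_transfer hF hz hpqD hdD hsatD
      obtain ⟨φ, hφ, hs⟩ := (sat_disjList M' x' l).1 (hD' x' hx')
      exact (hmemf φ hφ).2 hs
    · -- downward closed
      intro v k v' hz m hm
      rintro φ ⟨hmem, hs⟩
      obtain ⟨hpq, hd⟩ := (hF m P Q).1 φ hmem
      exact ⟨hmem, th_transfer hF hz hpq (le_trans hd hm) hs⟩
  tfae_have 3 → 2 := by
    rintro ⟨Z, h1, _, h3⟩
    exact ⟨Z, h1, h3⟩
  tfae_have 2 → 1 := by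
    rintro ⟨Z, hZ, hz⟩ φ ⟨hmem, hs⟩
    obtain ⟨hpq, hd⟩ := (hF n P Q).1 φ hmem
    exact ⟨hmem, (bisim_transfer hZ φ n w w' hd hz).1 hpq hs⟩
  tfae_finish
end

section
/- For any consistent normal modal logic L, the following are equivalent: (1) for every formula φ and all finite sets P, Q of propositional variables there exists a uniform Lyndon interpolant θ of (φ,P,Q) in L with d(θ) ≤ d(φ); (2) L is sound and complete with respect to some class Cl of Kripke models that has ULIP. -/
namespace ULIPAux
open Formula Classical

/-! ### Semantics lemmas -/

lemma sat_neg (M : KripkeModel) (a : Formula) (w : M.W) :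
    M.Sat a.neg w ↔ ¬ M.Sat a w := by
  simp [Formula.neg, KripkeModel.Sat]

lemma sat_and (M : KripkeModel) (a b : Formula) (w : M.W) :
    M.Sat (a.and b) w ↔ (M.Sat a w ∧ M.Sat b w) := by
  simp [Formula.and, Formula.neg, KripkeModel.Sat]

lemma sat_top (M : KripkeModel) (w : M.W) : M.Sat Formula.top w := by
  simp [Formula.top, Formula.neg, KripkeModel.Sat]

lemma sat_iff (M : KripkeModel) (a b : Formula) (w : M.W)
    (h : M.Sat (Formula.iff a b) w) : (M.Sat a w ↔ M.Sat b w) := by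
  rw [Formula.iff, sat_and] at h
  simp only [KripkeModel.Sat] at h
  tauto

/-- Disjunction. -/
def orF (a b : Formula) : Formula := a.neg.imp b

lemma sat_orF (M : KripkeModel) (a b : Formula) (w : M.W) :
    M.Sat (orF a b) w ↔ (M.Sat a w ∨ M.Sat b w) := by
  simp [orF, Formula.neg, KripkeModel.Sat]; tauto

def disjList : List Formula → Formula
  | [] => Formula.bot
  | φ :: l => orF φ (disjList l)

lemma sat_conjList (M : KripkeModel) (l : List Formula) (w : M.W) :
    M.Sat (conjList l) w ↔ ∀ χ ∈ l, M.Sat χ w := by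
  induction l with
  | nil => simp [conjList, sat_top M w]
  | cons a l ih => simp [conjList, sat_and, ih]

lemma sat_disjList (M : KripkeModel) (l : List Formula) (w : M.W) :
    M.Sat (disjList l) w ↔ ∃ χ ∈ l, M.Sat χ w := by
  induction l with
  | nil => simp [disjList, KripkeModel.Sat]
  | cons a l ih => simp [disjList, sat_orF, ih]

/-! ### vsgn and depth lemmas -/

lemma vsgn_neg (a : Formula) (s : Bool) : a.neg.vsgn s = a.vsgn (!s) := by
  simp [Formula.neg, Formula.vsgn]

lemma vsgn_and (a b : Formula) (s : Bool) : (a.and b).vsgn s = a.vsgn s ∪ b.vsgn s := by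
  simp [Formula.and, Formula.neg, Formula.vsgn, Bool.not_not]

lemma vsgn_orF (a b : Formula) (s : Bool) : (orF a b).vsgn s = a.vsgn s ∪ b.vsgn s := by
  simp [orF, Formula.neg, Formula.vsgn, Bool.not_not]

lemma vsgn_top (s : Bool) : Formula.top.vsgn s = ∅ := by
  simp [Formula.top, Formula.neg, Formula.vsgn]

lemma vsgn_conjList (l : List Formula) (s : Bool) (x : ℕ)
    (hx : x ∈ (conjList l).vsgn s) : ∃ χ ∈ l, x ∈ χ.vsgn s := by
  induction l with
  | nil => simp [conjList, vsgn_top] at hx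
  | cons a l ih =>
      rw [conjList, vsgn_and, Finset.mem_union] at hx
      rcases hx with h | h
      · exact ⟨a, by simp, h⟩
      · obtain ⟨χ, hχ, hχ2⟩ := ih h; exact ⟨χ, by simp [hχ], hχ2⟩

lemma vsgn_disjList (l : List Formula) (s : Bool) (x : ℕ)
    (hx : x ∈ (disjList l).vsgn s) : ∃ χ ∈ l, x ∈ χ.vsgn s := by
  induction l with
  | nil => simp [disjList, Formula.vsgn] at hx
  | cons a l ih =>
      rw [disjList, vsgn_orF, Finset.mem_union] at hx
      rcases hx with h | h
      · exact ⟨a, by simp, h⟩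
      · obtain ⟨χ, hχ, hχ2⟩ := ih h; exact ⟨χ, by simp [hχ], hχ2⟩

lemma depth_and (a b : Formula) : (a.and b).depth = max a.depth b.depth := by
  simp [Formula.and, Formula.neg, Formula.depth]

lemma depth_orF (a b : Formula) : (orF a b).depth = max a.depth b.depth := by
  simp [orF, Formula.neg, Formula.depth]

lemma depth_top : Formula.top.depth = 0 := by simp [Formula.top, Formula.neg, Formula.depth]

lemma depth_conjList (l : List Formula) (n : ℕ) (h : ∀ χ ∈ l, χ.depth ≤ n) :
    (conjList l).depth ≤ n := by
  induction l with
  | nil => simp [conjList, depth_top]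
  | cons a l ih =>
      rw [conjList, depth_and]
      exact max_le (h a (by simp)) (ih fun χ hχ => h χ (by simp [hχ]))

lemma depth_disjList (l : List Formula) (n : ℕ) (h : ∀ χ ∈ l, χ.depth ≤ n) :
    (disjList l).depth ≤ n := by
  induction l with
  | nil => simp [disjList, Formula.depth]
  | cons a l ih =>
      rw [disjList, depth_orF]
      exact max_le (h a (by simp)) (ih fun χ hχ => h χ (by simp [hχ]))

end ULIPAux
namespace ULIPAux
open Formula Classical

/-! ### Soundness of K over all Kripke models -/

def substModel (M : KripkeModel) (σ : ℕ → Formula) : KripkeModel :=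
  ⟨M.W, M.nonempty, M.rel, fun w p => M.Sat (σ p) w⟩

lemma sat_substModel (M : KripkeModel) (σ : ℕ → Formula) (φ : Formula) :
    ∀ w : M.W, (substModel M σ).Sat φ w ↔ M.Sat (φ.subst σ) w := by
  induction φ with
  | var p => intro w; simp [substModel, KripkeModel.Sat, Formula.subst]
  | bot => intro w; simp [KripkeModel.Sat, Formula.subst]
  | imp a b iha ihb =>
      intro w
      simp only [KripkeModel.Sat, Formula.subst, iha, ihb]
  | box a ih =>
      intro w
      simp only [KripkeModel.Sat, Formula.subst]
      constructor
      · intro h x hx; exact (ih x).mp (h x hx)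
      · intro h x hx; exact (ih x).mpr (h x hx)

def ValidAll : Set Formula := {φ | ∀ (M : KripkeModel) (w : M.W), M.Sat φ w}

lemma tautology_sat (φ : Formula) (h : Tautology φ) (M : KripkeModel) (w : M.W) :
    M.Sat φ w := by
  classical
  set v : Formula → Bool := fun ψ => if M.Sat ψ w then true else false with hv
  have h0 : v Formula.bot = false := by
    simp only [hv]; exact if_neg (fun h => h)
  have h1 : ∀ ψ θ : Formula, v (ψ.imp θ) = (!v ψ || v θ) := by
    intro ψ θ
    by_cases hψ : M.Sat ψ w <;> by_cases hθ : M.Sat θ w <;>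
      simp [hv, KripkeModel.Sat, hψ, hθ]
  have := h v h0 h1
  simp only [hv] at this
  by_contra hc
  simp [hc] at this

lemma validAll_normal : IsNormal ValidAll := by
  constructor
  · exact fun φ h M w => tautology_sat φ h M w
  · intro M w
    simp only [KripkeModel.Sat]
    intro h1 h2 x hx
    exact h1 x hx (h2 x hx)
  · intro φ ψ h1 h2 M w
    exact h1 M w (h2 M w)
  · intro φ h M w
    intro x _
    exact h M x
  · intro φ h σ M w
    exact (sat_substModel M σ φ w).mp (h (substModel M σ) w)

lemma theoryK_sound {φ : Formula} (h : φ ∈ TheoryK) : ∀ (M : KripkeModel) (w : M.W), M.Sat φ w := by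
  have : ValidAll ∈ {L : Set Formula | IsNormal L ∧ (∅ : Set Formula) ⊆ L} :=
    ⟨validAll_normal, by simp⟩
  exact Set.sInter_subset_of_mem this h

lemma theoryK_sub {L : Set Formula} (hL : IsNormal L) : TheoryK ⊆ L :=
  Set.sInter_subset_of_mem ⟨hL, by simp⟩

end ULIPAux
namespace ULIPAux
open Formula

/-! ### Hilbert-style derivations -/

section Hilbert
variable {L : Set Formula} (hL : IsNormal L)
include hL

lemma taut_mem (φ : Formula) (h : Tautology φ) : φ ∈ L := hL.taut φ h

lemma l_id (a : Formula) : a.imp a ∈ L := by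
  apply hL.taut; intro v h0 h1
  simp only [h1, h0]
  cases v a <;> rfl

lemma l_thm_imp {b : Formula} (a : Formula) (h : b ∈ L) : a.imp b ∈ L := by
  refine hL.mp _ _ ?_ h
  apply hL.taut; intro v h0 h1
  simp only [h1, h0]
  cases v a <;> cases v b <;> rfl

lemma l_imp_trans {a b c : Formula} (h1 : a.imp b ∈ L) (h2 : b.imp c ∈ L) : a.imp c ∈ L := by
  refine hL.mp _ _ (hL.mp _ _ ?_ h1) h2
  apply hL.taut; intro v h0 h1
  simp only [h1, h0]
  cases v a <;> cases v b <;> cases v c <;> rfl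

lemma l_and_intro_imp {a b c : Formula} (h1 : c.imp a ∈ L) (h2 : c.imp b ∈ L) :
    c.imp (a.and b) ∈ L := by
  refine hL.mp _ _ (hL.mp _ _ ?_ h1) h2
  apply hL.taut; intro v h0 h1
  simp only [Formula.and, Formula.neg, h1, h0]
  cases v a <;> cases v b <;> cases v c <;> rfl

lemma l_and_left (a b : Formula) : (a.and b).imp a ∈ L := by
  apply hL.taut; intro v h0 h1
  simp only [Formula.and, Formula.neg, h1, h0]
  cases v a <;> cases v b <;> rfl

lemma l_and_right (a b : Formula) : (a.and b).imp b ∈ L := by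
  apply hL.taut; intro v h0 h1
  simp only [Formula.and, Formula.neg, h1, h0]
  cases v a <;> cases v b <;> rfl

lemma l_top : Formula.top ∈ L := by
  apply hL.taut; intro v h0 h1
  simp only [Formula.top, Formula.neg, h1, h0]
  rfl

lemma l_nn_elim (a : Formula) : a.neg.neg.imp a ∈ L := by
  apply hL.taut; intro v h0 h1
  simp only [Formula.neg, h1, h0]
  cases v a <;> rfl

lemma l_shunt {x φ : Formula} (h : (x.and φ).imp Formula.bot ∈ L) : x.imp φ.neg ∈ L := by
  refine hL.mp _ _ ?_ h
  apply hL.taut; intro v h0 h1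
  simp only [Formula.and, Formula.neg, h1, h0]
  cases v x <;> cases v φ <;> rfl

lemma l_neg_and {a c : Formula} (h : (a.and c).neg ∈ L) : a.imp c.neg ∈ L := by
  refine hL.mp _ _ ?_ h
  apply hL.taut; intro v h0 h1
  simp only [Formula.and, Formula.neg, h1, h0]
  cases v a <;> cases v c <;> rfl

lemma l_imp_mp {a b c : Formula} (h1 : c.imp (a.imp b) ∈ L) (h2 : c.imp a ∈ L) :
    c.imp b ∈ L := by
  refine hL.mp _ _ (hL.mp _ _ ?_ h1) h2
  apply hL.taut; intro v h0 h1
  simp only [h1, h0]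
  cases v a <;> cases v b <;> cases v c <;> rfl

lemma l_assemble {a b c d : Formula} (h1 : a.imp (b.imp d) ∈ L) (h2 : c.imp b ∈ L) :
    (a.and c).imp d ∈ L := by
  refine hL.mp _ _ (hL.mp _ _ ?_ h1) h2
  apply hL.taut; intro v h0 h1
  simp only [Formula.and, Formula.neg, h1, h0]
  cases v a <;> cases v b <;> cases v c <;> cases v d <;> rfl

lemma l_and_pair (a b : Formula) : a.imp (b.imp (a.and b)) ∈ L := by
  apply hL.taut; intro v h0 h1
  simp only [Formula.and, Formula.neg, h1, h0]
  cases v a <;> cases v b <;> rfl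


lemma l_imp_k (a b : Formula) : b.imp (a.imp b) ∈ L := by
  apply hL.taut; intro v h0 h1
  simp only [h1, h0]
  cases v a <;> cases v b <;> rfl

lemma l_exfalso_imp (a b : Formula) : a.neg.imp (a.imp b) ∈ L := by
  apply hL.taut; intro v h0 h1
  simp only [Formula.neg, h1, h0]
  cases v a <;> cases v b <;> rfl

lemma l_conj_intro {ψ : Formula} {l : List Formula} (h : ∀ χ ∈ l, ψ.imp χ ∈ L) :
    ψ.imp (conjList l) ∈ L := by
  induction l with
  | nil => exact l_thm_imp hL ψ (l_top hL)
  | cons a l ih =>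
      exact l_and_intro_imp hL (h a (by simp)) (ih fun χ hχ => h χ (by simp [hχ]))

lemma l_conj_elim {χ : Formula} {l : List Formula} (h : χ ∈ l) :
    (conjList l).imp χ ∈ L := by
  induction l with
  | nil => simp at h
  | cons a l ih =>
      rcases List.mem_cons.mp h with rfl | h
      · exact l_and_left hL _ _
      · exact l_imp_trans hL (l_and_right hL _ _) (ih h)

lemma l_axK (a b : Formula) : (a.imp b).box.imp (a.box.imp b.box) ∈ L := by
  have := hL.subst_mem _ hL.axK (fun k => if k = 0 then a else b)
  simpa [Formula.subst] using this

lemma l_box_mono {a b : Formula} (h : a.imp b ∈ L) : a.box.imp b.box ∈ L :=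
  hL.mp _ _ (l_axK hL a b) (hL.nec _ h)

lemma l_box_conj (l : List Formula) :
    (conjList (l.map Formula.box)).imp (conjList l).box ∈ L := by
  induction l with
  | nil =>
      exact l_thm_imp hL _ (hL.nec _ (l_top hL))
  | cons a l ih =>
      simp only [List.map_cons, conjList]
      have h1 : a.box.imp ((conjList l).imp (a.and (conjList l))).box ∈ L :=
        l_box_mono hL (l_and_pair hL a (conjList l))
      have h2 : ((conjList l).imp (a.and (conjList l))).box.imp
          ((conjList l).box.imp (a.and (conjList l)).box) ∈ L := l_axK hL _ _
      exact l_assemble hL (l_imp_trans hL h1 h2) ih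

end Hilbert
end ULIPAux
namespace ULIPAux
open Formula

/-! ### Derivability from a set, maximal consistent sets, Lindenbaum -/

def Der (L : Set Formula) (Γ : Set Formula) (φ : Formula) : Prop :=
  ∃ l : List Formula, (∀ χ ∈ l, χ ∈ Γ) ∧ (conjList l).imp φ ∈ L

def Con (L : Set Formula) (Γ : Set Formula) : Prop := ¬ Der L Γ Formula.bot

def MCS (L : Set Formula) (Γ : Set Formula) : Prop :=
  Con L Γ ∧ ∀ φ : Formula, φ ∈ Γ ∨ φ.neg ∈ Γ

section DerL
variable {L : Set Formula} (hL : IsNormal L)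

lemma der_mono {Γ Δ : Set Formula} {φ : Formula} (h : Γ ⊆ Δ) (hd : Der L Γ φ) : Der L Δ φ := by
  obtain ⟨l, h1, h2⟩ := hd
  exact ⟨l, fun χ hχ => h (h1 χ hχ), h2⟩

include hL

lemma der_of_mem {Γ : Set Formula} {φ : Formula} (h : φ ∈ Γ) : Der L Γ φ :=
  ⟨[φ], by simpa using h, l_conj_elim hL (by simp)⟩

lemma der_of_thm {Γ : Set Formula} {φ : Formula} (h : φ ∈ L) : Der L Γ φ :=
  ⟨[], by simp, l_thm_imp hL _ h⟩

lemma der_mp {Γ : Set Formula} {φ ψ : Formula} (h1 : Der L Γ (φ.imp ψ)) (h2 : Der L Γ φ) :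
    Der L Γ ψ := by
  obtain ⟨l1, m1, d1⟩ := h1
  obtain ⟨l2, m2, d2⟩ := h2
  refine ⟨l1 ++ l2, ?_, ?_⟩
  · intro χ hχ; rcases List.mem_append.mp hχ with h | h
    · exact m1 χ h
    · exact m2 χ h
  · have e1 : (conjList (l1 ++ l2)).imp (conjList l1) ∈ L :=
      l_conj_intro hL fun χ hχ => l_conj_elim hL (by simp [hχ])
    have e2 : (conjList (l1 ++ l2)).imp (conjList l2) ∈ L :=
      l_conj_intro hL fun χ hχ => l_conj_elim hL (by simp [hχ])
    exact l_imp_mp hL (l_imp_trans hL e1 d1) (l_imp_trans hL e2 d2)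

lemma der_empty {φ : Formula} (h : Der L (∅ : Set Formula) φ) : φ ∈ L := by
  obtain ⟨l, m, d⟩ := h
  have : l = [] := by
    cases l with
    | nil => rfl
    | cons a l => exact absurd (m a (by simp)) (by simp)
  subst this
  exact hL.mp _ _ d (l_top hL)

lemma mcs_closed {Γ : Set Formula} (hΓ : MCS L Γ) {φ : Formula} (h : Der L Γ φ) : φ ∈ Γ := by
  rcases hΓ.2 φ with hm | hm
  · exact hm
  · exact absurd (der_mp hL (der_of_mem hL hm) h) hΓ.1

lemma mcs_not_both {Γ : Set Formula} (hΓ : MCS L Γ) {φ : Formula} (h : φ ∈ Γ)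
    (h' : φ.neg ∈ Γ) : False :=
  hΓ.1 (der_mp hL (der_of_mem hL h') (der_of_mem hL h))

/-- Deduction-style lemma. -/
lemma der_deduction {Γ : Set Formula} {φ : Formula} (h : Der L (Γ ∪ {φ}) Formula.bot) :
    Der L Γ φ.neg := by
  classical
  obtain ⟨l, m, d⟩ := h
  refine ⟨l.filter (fun χ => χ ≠ φ), ?_, ?_⟩
  · intro χ hχ
    have h1 := List.mem_filter.mp hχ
    rcases m χ h1.1 with h | h
    · exact h
    · exact absurd h (by simpa using h1.2)
  · apply l_shunt hL
    set x := conjList (l.filter (fun χ => χ ≠ φ)) with hx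
    have hall : ∀ χ ∈ l, (x.and φ).imp χ ∈ L := by
      intro χ hχ
      by_cases hc : χ = φ
      · subst hc; exact l_and_right hL _ _
      · exact l_imp_trans hL (l_and_left hL _ _)
          (l_conj_elim hL (List.mem_filter.mpr ⟨hχ, by simpa using hc⟩))
    exact l_imp_trans hL (l_conj_intro hL hall) d

lemma lindenbaum {Γ : Set Formula} (h : Con L Γ) : ∃ Δ : Set Formula, Γ ⊆ Δ ∧ MCS L Δ := by
  classical
  have hzorn := zorn_subset_nonempty {Δ : Set Formula | Γ ⊆ Δ ∧ Con L Δ} ?_ Γ ⟨subset_rfl, h⟩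
  · obtain ⟨Δ, hΓΔ, hmax⟩ := hzorn
    have hΔS : Γ ⊆ Δ ∧ Con L Δ := hmax.prop
    refine ⟨Δ, hΓΔ, hΔS.2, ?_⟩
    intro φ
    by_contra hc
    push_neg at hc
    have h1 : ¬ Con L (Δ ∪ {φ}) := by
      intro hcon
      have := hmax.eq_of_subset (t := Δ ∪ {φ})
        ⟨hΔS.1.trans Set.subset_union_left, hcon⟩ Set.subset_union_left
      exact hc.1 (this ▸ Set.mem_union_right _ (Set.mem_singleton φ))
    have h2 : ¬ Con L (Δ ∪ {φ.neg}) := by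
      intro hcon
      have := hmax.eq_of_subset (t := Δ ∪ {φ.neg})
        ⟨hΔS.1.trans Set.subset_union_left, hcon⟩ Set.subset_union_left
      exact hc.2 (this ▸ Set.mem_union_right _ (Set.mem_singleton _))
    rw [Con, not_not] at h1 h2
    have d1 : Der L Δ φ.neg := der_deduction hL h1
    have d2 : Der L Δ φ.neg.neg := der_deduction hL h2
    exact hΔS.2 (der_mp hL d2 d1)
  · rintro c hc hchain ⟨Δ0, hΔ0⟩
    refine ⟨⋃₀ c, ⟨((hc hΔ0).1).trans (Set.subset_sUnion_of_mem hΔ0), ?_⟩,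
      fun Δ hΔ => Set.subset_sUnion_of_mem hΔ⟩
    rintro ⟨l, m, d⟩
    have key : ∀ l' : List Formula, (∀ χ ∈ l', χ ∈ ⋃₀ c) → ∃ Δ ∈ c, ∀ χ ∈ l', χ ∈ Δ := by
      intro l'
      induction l' with
      | nil => intro _; exact ⟨Δ0, hΔ0, by simp⟩
      | cons a t ih =>
          intro hm
          obtain ⟨Δ1, hΔ1, hΔ1t⟩ := ih fun χ hχ => hm χ (by simp [hχ])
          obtain ⟨Δ2, hΔ2, ha⟩ := hm a (by simp)
          by_cases heq : Δ1 = Δ2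
          · subst heq
            exact ⟨Δ1, hΔ1, by
              intro χ hχ
              rcases List.mem_cons.mp hχ with rfl | hχ
              · exact ha
              · exact hΔ1t χ hχ⟩
          · rcases hchain hΔ1 hΔ2 heq with hsub | hsub
            · exact ⟨Δ2, hΔ2, by
                intro χ hχ
                rcases List.mem_cons.mp hχ with rfl | hχ
                · exact ha
                · exact hsub (hΔ1t χ hχ)⟩
            · exact ⟨Δ1, hΔ1, by
                intro χ hχ
                rcases List.mem_cons.mp hχ with rfl | hχ
                · exact hsub ha
                · exact hΔ1t χ hχ⟩
    obtain ⟨Δ, hΔc, hΔl⟩ := key l m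
    exact (hc hΔc).2 ⟨l, hΔl, d⟩

end DerL
end ULIPAux
namespace ULIPAux
open Formula

/-! ### Canonical model -/

section Canonical

lemma con_empty (L : Set Formula) (hL : IsNormal L) (hcons : Formula.bot ∉ L) :
    Con L (∅ : Set Formula) := fun h => hcons (der_empty hL h)

noncomputable def canModel (L : Set Formula) (hL : IsNormal L) (hcons : Formula.bot ∉ L) :
    KripkeModel where
  W := {Γ : Set Formula // MCS L Γ}
  nonempty := by
    obtain ⟨Δ, _, hΔ⟩ := lindenbaum hL (con_empty L hL hcons)
    exact ⟨⟨Δ, hΔ⟩⟩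
  rel := fun Γ Δ => ∀ φ : Formula, φ.box ∈ Γ.1 → φ ∈ Δ.1
  val := fun Γ p => Formula.var p ∈ Γ.1

lemma truth_lemma (L : Set Formula) (hL : IsNormal L) (hcons : Formula.bot ∉ L) (φ : Formula) :
    ∀ Γ : (canModel L hL hcons).W, (canModel L hL hcons).Sat φ Γ ↔ φ ∈ Γ.1 := by
  induction φ with
  | var p => intro Γ; simp [canModel, KripkeModel.Sat]
  | bot =>
      intro Γ
      simp only [KripkeModel.Sat, false_iff]
      exact fun h => Γ.2.1 (der_of_mem hL h)
  | imp a b iha ihb =>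
      intro Γ
      simp only [KripkeModel.Sat, iha, ihb]
      constructor
      · intro h
        rcases Γ.2.2 a with ha | ha
        · have hb : b ∈ Γ.1 := h ha
          exact mcs_closed hL Γ.2
            (der_mp hL (der_of_thm hL (l_imp_k hL a b)) (der_of_mem hL hb))
        · exact mcs_closed hL Γ.2
            (der_mp hL (der_of_thm hL (l_exfalso_imp hL a b)) (der_of_mem hL ha))
      · intro h ha
        exact mcs_closed hL Γ.2 (der_mp hL (der_of_mem hL h) (der_of_mem hL ha))
  | box a ih =>
      intro Γ
      simp only [KripkeModel.Sat]
      constructor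
      · intro h
        by_contra hbox
        -- build a successor refuting a
        set S : Set Formula := {ψ | ψ.box ∈ Γ.1} with hS
        have hconS : Con L (S ∪ {a.neg}) := by
          intro hder
          have d1 : Der L S a.neg.neg := der_deduction hL hder
          obtain ⟨l, hm, hd⟩ := d1
          have h2 : (conjList l).imp a ∈ L := l_imp_trans hL hd (l_nn_elim hL a)
          have h3 : (conjList l).box.imp a.box ∈ L := l_box_mono hL h2
          have h4 : (conjList (l.map Formula.box)).imp a.box ∈ L :=
            l_imp_trans hL (l_box_conj hL l) h3
          have h5 : Der L Γ.1 (conjList (l.map Formula.box)) := by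
            refine ⟨l.map Formula.box, ?_, l_id hL _⟩
            intro χ hχ
            obtain ⟨ψ, hψ, rfl⟩ := List.mem_map.mp hχ
            exact hm ψ hψ
          exact hbox (mcs_closed hL Γ.2 (der_mp hL (der_of_thm hL h4) h5))
        obtain ⟨Δ, hΔsub, hΔ⟩ := lindenbaum hL hconS
        have hrel : (canModel L hL hcons).rel Γ ⟨Δ, hΔ⟩ := by
          intro ψ hψ
          exact hΔsub (Set.mem_union_left _ hψ)
        have := (ih ⟨Δ, hΔ⟩).mp (h ⟨Δ, hΔ⟩ hrel)
        exact mcs_not_both hL hΔ this (hΔsub (Set.mem_union_right _ rfl))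
      · intro h Δ hrel
        exact (ih Δ).mpr (hrel a h)

end Canonical
end ULIPAux
namespace ULIPAux
open Formula

/-! ### Soundness & completeness wrt the class of all L-validating models -/

def ClL (L : Set Formula) : Set KripkeModel :=
  {M : KripkeModel | ∀ φ ∈ L, ∀ w : M.W, M.Sat φ w}

lemma canModel_mem_ClL (L : Set Formula) (hL : IsNormal L) (hcons : Formula.bot ∉ L) :
    canModel L hL hcons ∈ ClL L := by
  intro φ hφ Γ
  exact (truth_lemma L hL hcons φ Γ).mpr (mcs_closed hL Γ.2 (der_of_thm hL hφ))

lemma soundness_complete (L : Set Formula) (hL : IsNormal L) (hcons : Formula.bot ∉ L) :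
    ∀ φ : Formula, φ ∈ L ↔ ∀ M : KripkeModel, M ∈ ClL L → ∀ w : M.W, M.Sat φ w := by
  intro φ
  constructor
  · intro hφ M hM w; exact hM φ hφ w
  · intro hval
    by_contra hφ
    have hcon : Con L ({φ.neg} : Set Formula) := by
      intro hder
      have : Der L ((∅ : Set Formula) ∪ {φ.neg}) Formula.bot := by
        rwa [Set.empty_union]
      have h2 := der_empty hL (der_deduction hL this)
      exact hφ (hL.mp _ _ (l_nn_elim hL φ) h2)
    obtain ⟨Δ, hsub, hΔ⟩ := lindenbaum hL hcon
    have hsat := hval (canModel L hL hcons) (canModel_mem_ClL L hL hcons) ⟨Δ, hΔ⟩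
    have hmem := (truth_lemma L hL hcons φ ⟨Δ, hΔ⟩).mp hsat
    exact mcs_not_both hL hΔ hmem (hsub rfl)

lemma ClL_validates_K {L : Set Formula} (hL : IsNormal L) {M : KripkeModel} (hM : M ∈ ClL L)
    {φ : Formula} (hφ : φ ∈ TheoryK) : ∀ w : M.W, M.Sat φ w :=
  hM φ (theoryK_sub hL hφ)

end ULIPAux
namespace ULIPAux
open Formula Classical

/-! ### Direction (1) → (2): the class ClL L has ULIP -/

lemma classULIP_of_ulip (F : ℕ → Finset ℕ → Finset ℕ → List Formula)
    (hF : IsFamily F) (L : Set Formula) (hL : IsNormal L) (hcons : Formula.bot ∉ L)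
    (hulip : ∀ (φ : Formula) (P Q : Finset ℕ), ∃ θ : Formula,
      IsULInterpolant L φ P Q θ ∧ θ.depth ≤ φ.depth) :
    ClassULIP F (ClL L) := by
  intro P1 P2 P3 Q1 Q2 Q3 h12 h13 h23 g12 g13 g23 M hM M' hM' w w' m n hTh
  classical
  set Al : List Formula := (F n (P1 ∪ P2) (Q1 ∪ Q2)).filter
    (fun φ => decide (M.Sat φ w)) with hAl
  set A : Formula := conjList Al with hA
  have hACfml : A = Cfml F M n (P1 ∪ P2) (Q1 ∪ Q2) w := by
    rw [hA, Cfml, hAl]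
  set Bl : List Formula := (F m (P2 ∪ P3) (Q2 ∪ Q3)).filter
    (fun χ => decide (¬ M'.Sat χ w')) with hBl
  set C : Formula := conjList (Bl.map Formula.neg) with hC
  set G : Formula := A.and C with hG
  -- properties of members of Al
  have hAlF : ∀ χ ∈ Al, χ ∈ F n (P1 ∪ P2) (Q1 ∪ Q2) ∧ M.Sat χ w := by
    intro χ hχ
    have := List.mem_filter.mp hχ
    exact ⟨this.1, of_decide_eq_true this.2⟩
  have hBlF : ∀ χ ∈ Bl, χ ∈ F m (P2 ∪ P3) (Q2 ∪ Q3) ∧ ¬ M'.Sat χ w' := by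
    intro χ hχ
    have := List.mem_filter.mp hχ
    exact ⟨this.1, of_decide_eq_true this.2⟩
  -- w satisfies A
  have hwA : M.Sat A w := by
    rw [hA, sat_conjList]
    intro χ hχ; exact (hAlF χ hχ).2
  -- w' satisfies C
  have hw'C : M'.Sat C w' := by
    rw [hC, sat_conjList]
    intro χ hχ
    obtain ⟨ψ, hψ, rfl⟩ := List.mem_map.mp hχ
    rw [sat_neg]
    exact (hBlF ψ hψ).2
  -- vsgn facts
  have hApos : A.vpos ⊆ P1 ∪ P2 := by
    intro x hx
    obtain ⟨χ, hχ, hxχ⟩ := vsgn_conjList Al true x hx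
    exact ((hF n (P1 ∪ P2) (Q1 ∪ Q2)).1 χ (hAlF χ hχ).1).1.1 hxχ
  have hAneg : A.vneg ⊆ Q1 ∪ Q2 := by
    intro x hx
    obtain ⟨χ, hχ, hxχ⟩ := vsgn_conjList Al false x hx
    exact ((hF n (P1 ∪ P2) (Q1 ∪ Q2)).1 χ (hAlF χ hχ).1).1.2 hxχ
  have hAdepth : A.depth ≤ n := by
    rw [hA]
    exact depth_conjList _ n fun χ hχ => ((hF n (P1 ∪ P2) (Q1 ∪ Q2)).1 χ (hAlF χ hχ).1).2
  -- the interpolant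
  obtain ⟨θ, ⟨hθpos, hθneg, hAθ, hθmin⟩, hθdepth⟩ := hulip A P1 Q1
  -- consistency of {G}
  have hconG : Con L ({G} : Set Formula) := by
    intro hder
    have hder2 : Der L ((∅ : Set Formula) ∪ {G}) Formula.bot := by rwa [Set.empty_union]
    have hGneg : G.neg ∈ L := der_empty hL (der_deduction hL hder2)
    have hAC : A.imp C.neg ∈ L := l_neg_and hL hGneg
    -- C.neg is free of P1 positively and Q1 negatively
    have hψpos : C.neg.vpos ∩ P1 = ∅ := by
      rw [Finset.eq_empty_iff_forall_notMem]
      intro x hx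
      rw [Finset.mem_inter] at hx
      have hx1 : x ∈ C.vsgn false := by
        have := hx.1
        rwa [Formula.vpos, vsgn_neg] at this
      obtain ⟨χ', hχ', hxχ'⟩ := vsgn_conjList _ false x hx1
      obtain ⟨χ, hχ, rfl⟩ := List.mem_map.mp hχ'
      rw [vsgn_neg] at hxχ'
      have : x ∈ P2 ∪ P3 := ((hF m (P2 ∪ P3) (Q2 ∪ Q3)).1 χ (hBlF χ hχ).1).1.1 hxχ'
      rcases Finset.mem_union.mp this with h | h
      · exact Finset.disjoint_left.mp h12 hx.2 h
      · exact Finset.disjoint_left.mp h13 hx.2 h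
    have hψneg : C.neg.vneg ∩ Q1 = ∅ := by
      rw [Finset.eq_empty_iff_forall_notMem]
      intro x hx
      rw [Finset.mem_inter] at hx
      have hx1 : x ∈ C.vsgn true := by
        have := hx.1
        rwa [Formula.vneg, vsgn_neg] at this
      obtain ⟨χ', hχ', hxχ'⟩ := vsgn_conjList _ true x hx1
      obtain ⟨χ, hχ, rfl⟩ := List.mem_map.mp hχ'
      rw [vsgn_neg] at hxχ'
      have : x ∈ Q2 ∪ Q3 := ((hF m (P2 ∪ P3) (Q2 ∪ Q3)).1 χ (hBlF χ hχ).1).1.2 hxχ'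
      rcases Finset.mem_union.mp this with h | h
      · exact Finset.disjoint_left.mp g12 hx.2 h
      · exact Finset.disjoint_left.mp g13 hx.2 h
    have hθC : θ.imp C.neg ∈ L := hθmin C.neg hψpos hψneg hAC
    -- θ is a (P2,Q2)-formula of depth ≤ n
    have hθP : PQFormula P2 Q2 θ := by
      constructor
      · intro x hx
        have := hθpos hx
        rw [Finset.mem_sdiff] at this
        rcases Finset.mem_union.mp (hApos this.1) with h | h
        · exact absurd h this.2
        · exact h
      · intro x hx
        have := hθneg hx
        rw [Finset.mem_sdiff] at this
        rcases Finset.mem_union.mp (hAneg this.1) with h | h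
        · exact absurd h this.2
        · exact h
    obtain ⟨θ₀, hθ₀F, hθ₀iff⟩ := (hF n P2 Q2).2 θ hθP (hθdepth.trans hAdepth)
    -- transfer along the theory inclusion
    have hwθ : M.Sat θ w := hM _ hAθ w hwA
    have hwθ₀ : M.Sat θ₀ w :=
      (sat_iff M θ₀ θ w (ClL_validates_K hL hM hθ₀iff w)).mpr hwθ
    have hθ₀Th : θ₀ ∈ Th F M n P2 Q2 w := ⟨hθ₀F, hwθ₀⟩
    have hw'θ₀ : M'.Sat θ₀ w' := (hTh hθ₀Th).2
    have hw'θ : M'.Sat θ w' :=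
      (sat_iff M' θ₀ θ w' (ClL_validates_K hL hM' hθ₀iff w')).mp hw'θ₀
    have hw'Cneg : M'.Sat C.neg w' := hM' _ hθC w' hw'θ
    rw [sat_neg] at hw'Cneg
    exact hw'Cneg hw'C
  -- extend {G} to an MCS, giving the required world in the canonical model
  obtain ⟨Δ, hΔsub, hΔ⟩ := lindenbaum hL hconG
  have hGΔ : G ∈ Δ := hΔsub rfl
  have hAΔ : A ∈ Δ :=
    mcs_closed hL hΔ (der_mp hL (der_of_thm hL (l_and_left hL A C)) (der_of_mem hL hGΔ))
  have hCΔ : C ∈ Δ :=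
    mcs_closed hL hΔ (der_mp hL (der_of_thm hL (l_and_right hL A C)) (der_of_mem hL hGΔ))
  refine ⟨canModel L hL hcons, canModel_mem_ClL L hL hcons, ⟨Δ, hΔ⟩, ?_, ?_⟩
  · -- first inclusion
    rintro χ ⟨hχF, hχw⟩
    have hχAl : χ ∈ Al := by
      rw [hAl, List.mem_filter]
      exact ⟨hχF, decide_eq_true hχw⟩
    have hχΔ : χ ∈ Δ :=
      mcs_closed hL hΔ (der_mp hL (der_of_thm hL (l_conj_elim hL hχAl)) (der_of_mem hL hAΔ))
    exact ⟨hχF, (truth_lemma L hL hcons χ ⟨Δ, hΔ⟩).mpr hχΔ⟩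
  · -- second inclusion
    rintro χ ⟨hχF, hχst⟩
    have hχΔ : χ ∈ Δ := (truth_lemma L hL hcons χ ⟨Δ, hΔ⟩).mp hχst
    refine ⟨hχF, ?_⟩
    by_contra hns
    have hχBl : χ ∈ Bl := by
      rw [hBl, List.mem_filter]
      exact ⟨hχF, decide_eq_true hns⟩
    have hnχ : χ.neg ∈ Δ :=
      mcs_closed hL hΔ (der_mp hL (der_of_thm hL
        (l_conj_elim hL (List.mem_map.mpr ⟨χ, hχBl, rfl⟩))) (der_of_mem hL hCΔ))
    exact mcs_not_both hL hΔ hχΔ hnχ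

end ULIPAux
namespace ULIPAux
open Formula Classical

/-! ### Direction (2) → (1): building uniform Lyndon interpolants semantically -/

lemma ulip_of_class (F : ℕ → Finset ℕ → Finset ℕ → List Formula) (hF : IsFamily F)
    (L : Set Formula) (Cl : Set KripkeModel)
    (hsc : ∀ φ : Formula, φ ∈ L ↔ ∀ M : KripkeModel, M ∈ Cl → ∀ w : M.W, M.Sat φ w)
    (hclu : ClassULIP F Cl) (φ : Formula) (P Q : Finset ℕ) :
    ∃ θ : Formula, IsULInterpolant L φ P Q θ ∧ θ.depth ≤ φ.depth := by
  classical
  set n : ℕ := φ.depth with hn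
  set P' : Finset ℕ := φ.vpos \ P with hP'
  set Q' : Finset ℕ := φ.vneg \ Q with hQ'
  set Sl : List (List Formula) := (F n P' Q').sublists.filter
    (fun S => decide (∃ M ∈ Cl, ∃ w : M.W, M.Sat φ w ∧
      (F n P' Q').filter (fun χ => decide (M.Sat χ w)) = S)) with hSl
  set θ : Formula := disjList (Sl.map conjList) with hθ
  have hSl_mem : ∀ S ∈ Sl, (∀ χ ∈ S, χ ∈ F n P' Q') ∧
      ∃ M ∈ Cl, ∃ w : M.W, M.Sat φ w ∧
        (F n P' Q').filter (fun χ => decide (M.Sat χ w)) = S := by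
    intro S hS
    have h := List.mem_filter.mp hS
    refine ⟨fun χ hχ => (List.mem_sublists.mp h.1).subset hχ, of_decide_eq_true h.2⟩
  have hmemF : ∀ χ ∈ F n P' Q', PQFormula P' Q' χ ∧ χ.depth ≤ n := (hF n P' Q').1
  refine ⟨θ, ⟨?_, ?_, ?_, ?_⟩, ?_⟩
  · -- positive variables
    intro x hx
    obtain ⟨d, hd, hxd⟩ := vsgn_disjList _ true x hx
    obtain ⟨S, hS, rfl⟩ := List.mem_map.mp hd
    obtain ⟨χ, hχ, hxχ⟩ := vsgn_conjList S true x hxd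
    exact (hmemF χ ((hSl_mem S hS).1 χ hχ)).1.1 hxχ
  · -- negative variables
    intro x hx
    obtain ⟨d, hd, hxd⟩ := vsgn_disjList _ false x hx
    obtain ⟨S, hS, rfl⟩ := List.mem_map.mp hd
    obtain ⟨χ, hχ, hxχ⟩ := vsgn_conjList S false x hxd
    exact (hmemF χ ((hSl_mem S hS).1 χ hχ)).1.2 hxχ
  · -- φ → θ is in L
    rw [hsc]
    intro M hM w
    simp only [KripkeModel.Sat]
    intro hφw
    set S : List Formula := (F n P' Q').filter (fun χ => decide (M.Sat χ w)) with hS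
    have hSSl : S ∈ Sl := by
      rw [hSl, List.mem_filter]
      refine ⟨List.mem_sublists.mpr List.filter_sublist, decide_eq_true ?_⟩
      exact ⟨M, hM, w, hφw, rfl⟩
    rw [hθ, sat_disjList]
    refine ⟨conjList S, List.mem_map.mpr ⟨S, hSSl, rfl⟩, ?_⟩
    rw [sat_conjList]
    intro χ hχ
    exact of_decide_eq_true (List.mem_filter.mp hχ).2
  · -- minimality
    intro ψ hψP hψQ hφψ
    rw [hsc]
    intro M' hM' w'
    simp only [KripkeModel.Sat]
    intro hθw'
    rw [hθ, sat_disjList] at hθw'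
    obtain ⟨d, hd, hdw'⟩ := hθw'
    obtain ⟨S, hS, rfl⟩ := List.mem_map.mp hd
    obtain ⟨-, M, hM, w, hφw, hfil⟩ := hSl_mem S hS
    have hThsub : Th F M n P' Q' w ⊆ Th F M' n P' Q' w' := by
      rintro χ ⟨hχF, hχw⟩
      have hχS : χ ∈ S := by
        rw [← hfil, List.mem_filter]
        exact ⟨hχF, decide_eq_true hχw⟩
      exact ⟨hχF, (sat_conjList M' S w').mp hdw' χ hχS⟩
    -- apply the class ULIP
    have h12 : Disjoint (φ.vpos ∩ P) P' := by
      rw [Finset.disjoint_left]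
      intro x hx hx'
      rw [hP', Finset.mem_sdiff] at hx'
      exact hx'.2 (Finset.mem_inter.mp hx).2
    have h13 : Disjoint (φ.vpos ∩ P) (ψ.vpos \ P') := by
      rw [Finset.disjoint_left]
      intro x hx hx'
      have hxψ : x ∈ ψ.vpos := (Finset.mem_sdiff.mp hx').1
      have hxP : x ∈ P := (Finset.mem_inter.mp hx).2
      have : x ∈ ψ.vpos ∩ P := Finset.mem_inter.mpr ⟨hxψ, hxP⟩
      rw [hψP] at this
      exact absurd this (Finset.notMem_empty x)
    have h23 : Disjoint P' (ψ.vpos \ P') := by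
      rw [Finset.disjoint_left]
      intro x hx hx'
      exact (Finset.mem_sdiff.mp hx').2 hx
    have g12 : Disjoint (φ.vneg ∩ Q) Q' := by
      rw [Finset.disjoint_left]
      intro x hx hx'
      rw [hQ', Finset.mem_sdiff] at hx'
      exact hx'.2 (Finset.mem_inter.mp hx).2
    have g13 : Disjoint (φ.vneg ∩ Q) (ψ.vneg \ Q') := by
      rw [Finset.disjoint_left]
      intro x hx hx'
      have hxψ : x ∈ ψ.vneg := (Finset.mem_sdiff.mp hx').1
      have hxQ : x ∈ Q := (Finset.mem_inter.mp hx).2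
      have : x ∈ ψ.vneg ∩ Q := Finset.mem_inter.mpr ⟨hxψ, hxQ⟩
      rw [hψQ] at this
      exact absurd this (Finset.notMem_empty x)
    have g23 : Disjoint Q' (ψ.vneg \ Q') := by
      rw [Finset.disjoint_left]
      intro x hx hx'
      exact (Finset.mem_sdiff.mp hx').2 hx
    obtain ⟨Mst, hMst, wst, incl1, incl2⟩ :=
      hclu (φ.vpos ∩ P) P' (ψ.vpos \ P') (φ.vneg ∩ Q) Q' (ψ.vneg \ Q')
        h12 h13 h23 g12 g13 g23 M hM M' hM' w w' ψ.depth n hThsub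
    -- transfer φ to wst
    have hφPQ : PQFormula ((φ.vpos ∩ P) ∪ P') ((φ.vneg ∩ Q) ∪ Q') φ := by
      constructor
      · intro x hx
        by_cases hxP : x ∈ P
        · exact Finset.mem_union_left _ (Finset.mem_inter.mpr ⟨hx, hxP⟩)
        · exact Finset.mem_union_right _ (Finset.mem_sdiff.mpr ⟨hx, hxP⟩)
      · intro x hx
        by_cases hxQ : x ∈ Q
        · exact Finset.mem_union_left _ (Finset.mem_inter.mpr ⟨hx, hxQ⟩)
        · exact Finset.mem_union_right _ (Finset.mem_sdiff.mpr ⟨hx, hxQ⟩)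
    obtain ⟨φ₀, hφ₀F, hφ₀iff⟩ :=
      (hF n ((φ.vpos ∩ P) ∪ P') ((φ.vneg ∩ Q) ∪ Q')).2 φ hφPQ (le_refl n)
    have hwφ₀ : M.Sat φ₀ w := (sat_iff M φ₀ φ w (theoryK_sound hφ₀iff M w)).mpr hφw
    have hwstφ₀ : Mst.Sat φ₀ wst := (incl1 ⟨hφ₀F, hwφ₀⟩).2
    have hwstφ : Mst.Sat φ wst := (sat_iff Mst φ₀ φ wst (theoryK_sound hφ₀iff Mst wst)).mp hwstφ₀
    have hwstψ : Mst.Sat ψ wst := (hsc _).mp hφψ Mst hMst wst hwstφ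
    -- transfer ψ to w'
    have hψPQ : PQFormula (P' ∪ (ψ.vpos \ P')) (Q' ∪ (ψ.vneg \ Q')) ψ := by
      constructor
      · intro x hx
        by_cases hxP : x ∈ P'
        · exact Finset.mem_union_left _ hxP
        · exact Finset.mem_union_right _ (Finset.mem_sdiff.mpr ⟨hx, hxP⟩)
      · intro x hx
        by_cases hxQ : x ∈ Q'
        · exact Finset.mem_union_left _ hxQ
        · exact Finset.mem_union_right _ (Finset.mem_sdiff.mpr ⟨hx, hxQ⟩)
    obtain ⟨ψ₀, hψ₀F, hψ₀iff⟩ :=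
      (hF ψ.depth (P' ∪ (ψ.vpos \ P')) (Q' ∪ (ψ.vneg \ Q'))).2 ψ hψPQ (le_refl _)
    have hwstψ₀ : Mst.Sat ψ₀ wst :=
      (sat_iff Mst ψ₀ ψ wst (theoryK_sound hψ₀iff Mst wst)).mpr hwstψ
    have hw'ψ₀ : M'.Sat ψ₀ w' := (incl2 ⟨hψ₀F, hwstψ₀⟩).2
    exact (sat_iff M' ψ₀ ψ w' (theoryK_sound hψ₀iff M' w')).mp hw'ψ₀
  · -- depth bound
    rw [hθ]
    apply depth_disjList
    intro d hd
    obtain ⟨S, hS, rfl⟩ := List.mem_map.mp hd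
    exact depth_conjList S n fun χ hχ => (hmemF χ ((hSl_mem S hS).1 χ hχ)).2

end ULIPAux
/-- A consistent normal modal logic has uniform Lyndon interpolants of depth bounded by
the depth of the interpolated formula iff it is sound and complete with respect to
some class of Kripke models having ULIP. -/
theorem ulip_kripke_characterization (F : ℕ → Finset ℕ → Finset ℕ → List Formula)
    (hF : IsFamily F) (L : Set Formula) (hL : IsNormal L) (hcons : Formula.bot ∉ L) :
    (∀ (φ : Formula) (P Q : Finset ℕ), ∃ θ : Formula,
        IsULInterpolant L φ P Q θ ∧ θ.depth ≤ φ.depth) ↔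
      ∃ Cl : Set KripkeModel,
        (∀ φ : Formula, φ ∈ L ↔ ∀ M : KripkeModel, M ∈ Cl → ∀ w : M.W, M.Sat φ w) ∧
        ClassULIP F Cl := by
  constructor
  · intro h
    exact ⟨ULIPAux.ClL L, ULIPAux.soundness_complete L hL hcons,
      ULIPAux.classULIP_of_ulip F hF L hL hcons h⟩
  · rintro ⟨Cl, hsc, hclu⟩ φ P Q
    exact ULIPAux.ulip_of_class F hF L Cl hsc hclu φ P Q
end
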